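/- arXiv:2010.07433 — 5 statements merged into one kernel-verified Lean document; each statement's English description precedes it below -/
import Mathlib

section
/- For every natural number n, the automorphism group of the free group on n generators is generated by the elementary Nielsen automorphisms. Precisely: let F = FreeGroup (Fin n) with generators a_1, …, a_n. Then the subgroup of MulAut F generated by the following three families of automorphisms is all of MulAut F: (a) for each i, the automorphism sending a_i to a_i⁻¹ and fixing all other generators; (b) for each pair i ≠ j, the automorphism interchanging a_i and a_j and fixing all other generators; (c) for each pair i ≠ j, the automorphism sending a_i to a_i * a_j and fixing all other generators. -/
namespace NielsenProof
open FreeGroup List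

set_option linter.unusedSectionVars false
set_option maxHeartbeats 1000000

variable {α : Type*} [DecidableEq α]

/-- Reducedness of a word. -/
def Rd (L : List (α × Bool)) : Prop :=
  List.Chain' (fun a b => ¬(a.1 = b.1 ∧ a.2 = !b.2)) L

lemma rd_nil : Rd ([] : List (α × Bool)) := List.isChain_nil

lemma Rd.infix {L M : List (α × Bool)} (h : Rd L) (h' : M <:+: L) : Rd M :=
  List.IsChain.infix h h'

lemma Rd.tail' {c : α × Bool} {L : List (α × Bool)} (h : Rd (c :: L)) : Rd L :=
  List.IsChain.tail h

lemma rd_append {L₁ L₂ : List (α × Bool)} (h₁ : Rd L₁) (h₂ : Rd L₂)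
    (h : ∀ x ∈ L₁.getLast?, ∀ y ∈ L₂.head?, ¬(x.1 = y.1 ∧ x.2 = !y.2)) : Rd (L₁ ++ L₂) :=
  List.isChain_append.mpr ⟨h₁, h₂, h⟩

lemma reduce_eq_self_of_rd {L : List (α × Bool)} (h : Rd L) : reduce L = L := by
  induction L with
  | nil => rfl
  | cons x L ih =>
    have hL : Rd L := h.tail'
    rw [reduce.cons, ih hL]
    cases L with
    | nil => rfl
    | cons hd tl =>
      have : ¬(x.1 = hd.1 ∧ x.2 = !hd.2) := (List.isChain_cons_cons.mp h).1
      simp [this]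

lemma rd_reduce (L : List (α × Bool)) : Rd (reduce L) := by
  induction L with
  | nil => exact rd_nil
  | cons x L ih =>
    rw [reduce.cons]
    rcases h : reduce L with _ | ⟨hd, tl⟩
    · exact List.isChain_singleton x
    · rw [h] at ih
      by_cases hc : x.1 = hd.1 ∧ x.2 = !hd.2
      · simp only [hc, if_true]
        exact ih.tail
      · simp only [hc, if_false]
        exact List.isChain_cons_cons.mpr ⟨hc, ih⟩

lemma rd_toWord (x : FreeGroup α) : Rd x.toWord := by
  rw [← reduce_toWord]; exact rd_reduce _

lemma toWord_mk_of_rd {L : List (α × Bool)} (h : Rd L) : (mk L).toWord = L := by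
  rw [toWord_mk, reduce_eq_self_of_rd h]

lemma red_eq_of_length {L₁ L₂ : List (α × Bool)} (h : Red L₁ L₂)
    (hl : L₁.length = L₂.length) : L₁ = L₂ := by
  rcases Relation.ReflTransGen.cases_head h with rfl | ⟨L₃, hs, hr⟩
  · rfl
  · exfalso
    have h1 := FreeGroup.Red.Step.length hs
    have h2 := FreeGroup.Red.length_le hr
    omega

lemma invRev_append' (L M : List (α × Bool)) :
    invRev (L ++ M) = invRev M ++ invRev L := by
  simp [invRev]

lemma invRev_singleton (c : α × Bool) : invRev [c] = [(c.1, !c.2)] := by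
  simp [invRev]

/-- Word-level cancellation: concatenating two reduced words, the reduction splits them. -/
lemma cancel_words : ∀ L₁ L₂ : List (α × Bool), Rd L₁ → Rd L₂ →
    ∃ A B C, L₁ = A ++ C ∧ L₂ = invRev C ++ B ∧ reduce (L₁ ++ L₂) = A ++ B ∧ Rd (A ++ B) := by
  intro L₁
  induction L₁ using List.reverseRecOn with
  | nil =>
    intro L₂ _ h₂
    exact ⟨[], L₂, [], by simp, by simp [invRev], by simpa using reduce_eq_self_of_rd h₂, h₂⟩
  | append_singleton M c ih =>
    intro L₂ h₁ h₂
    rcases L₂ with _ | ⟨d, L₂'⟩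
    · exact ⟨M ++ [c], [], [], by simp, by simp [invRev],
        by simpa using reduce_eq_self_of_rd h₁, by simpa using h₁⟩
    · by_cases hcd : c.1 = d.1 ∧ c.2 = !d.2
      · -- cancellation at the junction
        have hM : Rd M := h₁.infix ⟨[], [c], by simp⟩
        have hL₂' : Rd L₂' := h₂.tail'
        obtain ⟨A, B, C, e1, e2, e3, e4⟩ := ih L₂' hM hL₂'
        refine ⟨A, B, C ++ [c], by rw [e1]; simp, ?_, ?_, e4⟩
        · rw [invRev_append', invRev_singleton]
          have hd : d = (c.1, !c.2) := by
            obtain ⟨h5, h6⟩ := hcd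
            cases d; cases c; simp_all
          rw [e2, hd]
          simp
        · have hstep : Red.Step ((M ++ [c]) ++ d :: L₂') (M ++ L₂') := by
            have hd : d = (c.1, !c.2) := by
              obtain ⟨h5, h6⟩ := hcd
              cases d; cases c; simp_all
            have hc : c = (c.1, !(!c.2)) := by cases c; simp
            rw [hd]
            conv_lhs => rw [hc]
            simpa using (FreeGroup.Red.Step.not_rev (L₁ := M) (L₂ := L₂') (x := c.1) (b := !c.2))
          rw [FreeGroup.reduce.Step.eq hstep, e3]
      · -- no cancellation: everything is already reduced
        refine ⟨M ++ [c], d :: L₂', [], by simp, by simp [invRev], ?_, ?_⟩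
        · have : Rd ((M ++ [c]) ++ d :: L₂') := by
            refine rd_append h₁ h₂ ?_
            intro x hx y hy
            simp at hx hy
            subst hx; subst hy
            exact hcd
          simpa using reduce_eq_self_of_rd this
        · refine rd_append h₁ h₂ ?_
          intro x hx y hy
          simp at hx hy
          subst hx; subst hy
          exact hcd

/-! ### Element-level length toolkit -/

/-- The length of (the reduced word of) an element of the free group. -/
def ln (x : FreeGroup α) : ℕ := x.toWord.length

lemma ln_mk_of_rd {L : List (α × Bool)} (h : Rd L) : ln (mk L) = L.length := by
  rw [ln, toWord_mk_of_rd h]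

lemma ln_inv (x : FreeGroup α) : ln x⁻¹ = ln x := by
  rw [ln, ln, toWord_inv, invRev_length]

@[simp] lemma ln_one : ln (1 : FreeGroup α) = 0 := by rw [ln, toWord_one]; rfl

lemma ln_eq_zero {x : FreeGroup α} : ln x = 0 ↔ x = 1 := by
  rw [ln, List.length_eq_zero_iff, toWord_eq_nil_iff]

lemma ln_of (a : α) : ln (of a) = 1 := by rw [ln, toWord_of]; rfl

lemma ln_mul_le (x y : FreeGroup α) : ln (x * y) ≤ ln x + ln y := by
  have := (toWord_mul_sublist x y).length_le
  simpa [ln] using this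

/-- Maximal cancellation decomposition for a product in the free group. -/
lemma exists_cancel (x y : FreeGroup α) : ∃ p r q : FreeGroup α,
    x = p * r ∧ y = r⁻¹ * q ∧ x * y = p * q ∧
    ln x = ln p + ln r ∧ ln y = ln r + ln q ∧
    ln (x * y) = ln p + ln q := by
  obtain ⟨A, B, C, e1, e2, e3, e4⟩ :=
    cancel_words x.toWord y.toWord (rd_toWord x) (rd_toWord y)
  have hA : Rd A := (rd_toWord x).infix ⟨[], C, by rw [e1]; simp⟩
  have hC : Rd C := (rd_toWord x).infix ⟨A, [], by rw [e1]; simp⟩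
  have hB : Rd B := (rd_toWord y).infix ⟨invRev C, [], by rw [e2]; simp⟩
  have hxy : x * y = mk (x.toWord ++ y.toWord) := by
    rw [← mul_mk, mk_toWord, mk_toWord]
  have hAB : x * y = mk (A ++ B) := by
    rw [hxy, ← reduce.self (L := x.toWord ++ y.toWord), e3]
  refine ⟨mk A, mk C, mk B, ?_, ?_, ?_, ?_, ?_, ?_⟩
  · rw [mul_mk, ← e1, mk_toWord]
  · rw [inv_mk, mul_mk, ← e2, mk_toWord]
  · rw [hAB, mul_mk]
  · rw [ln, e1, List.length_append, ln_mk_of_rd hA, ln_mk_of_rd hC]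
  · rw [ln, e2, List.length_append, ln_mk_of_rd hC, ln_mk_of_rd hB, invRev_length]
  · rw [hAB, ln_mk_of_rd e4, List.length_append, ln_mk_of_rd hA, ln_mk_of_rd hB]

/-- An additive factorization gives literal concatenation of reduced words. -/
lemma toWord_of_add {x a b : FreeGroup α} (h : x = a * b)
    (hn : ln x = ln a + ln b) : x.toWord = a.toWord ++ b.toWord := by
  subst h
  have h1 : a * b = mk (a.toWord ++ b.toWord) := by rw [← mul_mk, mk_toWord, mk_toWord]
  have h2 : (a * b).toWord = reduce (a.toWord ++ b.toWord) := by rw [h1, toWord_mk]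
  have h3 : Red (a.toWord ++ b.toWord) (reduce (a.toWord ++ b.toWord)) := reduce.red
  have h4 := red_eq_of_length h3 (by
    rw [← h2]
    have h5 : (a.toWord ++ b.toWord).length = ln a + ln b := by
      simp [ln]
    rw [h5, ← hn]
    rfl)
  rw [h2, ← h4]

lemma split_nest {x a b c d : FreeGroup α} (h1 : x = a * b)
    (n1 : ln x = ln a + ln b) (h2 : x = c * d) (n2 : ln x = ln c + ln d)
    (hl : ln d ≤ ln b) :
    ∃ e : FreeGroup α, b = e * d ∧ ln b = ln e + ln d ∧
      c = a * e ∧ ln c = ln a + ln e := by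
  have w1 := toWord_of_add h1 n1
  have w2 := toWord_of_add h2 n2
  have hna : ln a = a.toWord.length := rfl
  have hnb : ln b = b.toWord.length := rfl
  have hnc : ln c = c.toWord.length := rfl
  have hnd : ln d = d.toWord.length := rfl
  have hlen : a.toWord.length ≤ c.toWord.length := by
    have g1 := congrArg List.length w1
    have g2 := congrArg List.length w2
    simp only [List.length_append] at g1 g2
    omega
  have hW : a.toWord ++ b.toWord = c.toWord ++ d.toWord := by rw [← w1, ← w2]
  have htake : c.toWord.take a.toWord.length ++ (c.toWord.drop a.toWord.length ++ d.toWord)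
      = a.toWord ++ b.toWord := by
    rw [hW, ← List.append_assoc, List.take_append_drop]
  have hinj := List.append_inj htake.symm (by rw [List.length_take]; omega)
  have hRdE : Rd (c.toWord.drop a.toWord.length) :=
    (rd_toWord c).infix ((c.toWord.drop_suffix _).isInfix)
  have hBE : b.toWord = c.toWord.drop a.toWord.length ++ d.toWord := hinj.2
  have hCE : c.toWord = a.toWord ++ c.toWord.drop a.toWord.length := by
    conv_lhs => rw [← List.take_append_drop a.toWord.length c.toWord]
    rw [← hinj.1]
  refine ⟨mk (c.toWord.drop a.toWord.length), ?_, ?_, ?_, ?_⟩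
  · calc b = mk b.toWord := mk_toWord.symm
      _ = mk (c.toWord.drop a.toWord.length ++ d.toWord) := by rw [hBE]
      _ = mk (c.toWord.drop a.toWord.length) * mk d.toWord := (mul_mk).symm
      _ = mk (c.toWord.drop a.toWord.length) * d := by rw [mk_toWord]
  · rw [hnb, hBE, List.length_append, ln_mk_of_rd hRdE, hnd]
  · calc c = mk c.toWord := mk_toWord.symm
      _ = mk (a.toWord ++ c.toWord.drop a.toWord.length) := by rw [← hCE]
      _ = mk a.toWord * mk (c.toWord.drop a.toWord.length) := (mul_mk).symm
      _ = a * mk (c.toWord.drop a.toWord.length) := by rw [mk_toWord]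
  · rw [hnc, hna]
    conv_lhs => rw [hCE]
    rw [List.length_append, ln_mk_of_rd hRdE]

lemma split_eq {x a b c d : FreeGroup α} (h1 : x = a * b)
    (n1 : ln x = ln a + ln b) (h2 : x = c * d) (n2 : ln x = ln c + ln d)
    (hl : ln d = ln b) : a = c ∧ b = d := by
  obtain ⟨e, he1, he2, he3, he4⟩ := split_nest h1 n1 h2 n2 hl.le
  have h0 : ln e = 0 := by omega
  have he : e = 1 := ln_eq_zero.mp h0
  subst he
  exact ⟨by rw [he3, mul_one], by rw [he1, one_mul]⟩

/-- A nonempty reduced word is not its own formal inverse. -/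
lemma eq_nil_of_invRev_self {W : List (α × Bool)} (hRd : Rd W) (hW : invRev W = W) :
    W = [] := by
  by_contra hne
  have hlpos : 0 < W.length := List.length_pos_iff.mpr hne
  have hlr : (invRev W).length = W.length := invRev_length
  have hidx : ∀ (i j : ℕ) (hi : i < W.length) (hj : j < W.length),
      i + j + 1 = W.length → W[i] = ((W[j]).1, !(W[j]).2) := by
    intro i j hi hj hij
    have hj' : j = W.length - 1 - i := by omega
    subst hj'
    have p2 : i < ((W.map (fun g : α × Bool => (g.1, !g.2))).reverse).length := by
      simpa using hi
    calc W[i] = (invRev W)[i]'(by omega) := List.getElem_of_eq hW.symm hi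
      _ = ((W.map (fun g : α × Bool => (g.1, !g.2))).reverse)[i]'p2 := rfl
      _ = ((W[W.length - 1 - i]).1, !(W[W.length - 1 - i]).2) := by
          rw [List.getElem_reverse, List.getElem_map]
          simp only [List.length_map]
  rcases Nat.even_or_odd W.length with he | ho
  · obtain ⟨m, hm⟩ := he
    have hm1 : 1 ≤ m := by omega
    have hch := (List.isChain_iff_getElem.mp hRd) (m - 1) (by omega)
    have hidx2 : m - 1 + 1 = m := by omega
    have hg := hidx m (m - 1) (by omega) (by omega) (by omega)
    apply hch
    have e1 : (W[m - 1 + 1]'(by omega) : α × Bool) = W[m]'(by omega) := by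
      congr 1
    rw [e1, hg]
    simp
  · obtain ⟨m, hm⟩ := ho
    have hg := hidx m m (by omega) (by omega) (by omega)
    have := congrArg Prod.snd hg
    simp at this

/-- No nontrivial element of a free group is its own inverse. -/
lemma eq_one_of_self_inv {x : FreeGroup α} (h : x⁻¹ = x) : x = 1 := by
  have hW : invRev x.toWord = x.toWord := by
    rw [← toWord_inv, h]
  have := eq_nil_of_invRev_self (rd_toWord x) hW
  exact toWord_eq_nil_iff.mp this

/-- In a free group, `‖x²‖ ≥ ‖x‖`. -/
lemma ln_le_ln_sq (x : FreeGroup α) : ln x ≤ ln (x * x) := by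
  obtain ⟨p, r, q, h1, h2, h3, n1, n2, n3⟩ := exists_cancel x x
  by_contra hlt
  push_neg at hlt
  have hq : ln q < ln r := by omega
  have hp : ln p < ln r := by omega
  have n2' : ln x = ln r⁻¹ + ln q := by rw [ln_inv]; omega
  obtain ⟨e, he1, he2, he3, he4⟩ := split_nest h1 n1 h2 n2' (by omega)
  -- he1 : r = e * q, he3 : r⁻¹ = p * e
  have hr2 : r = e⁻¹ * p⁻¹ := by
    rw [← inv_inv r, he3, mul_inv_rev]
  have h4 : ln r = ln p + ln e := by
    calc ln r = ln r⁻¹ := (ln_inv r).symm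
      _ = ln p + ln e := he4
  have nr2 : ln r = ln e⁻¹ + ln p⁻¹ := by
    rw [ln_inv, ln_inv]; omega
  have hpq : ln q = ln p⁻¹ := by rw [ln_inv]; omega
  obtain ⟨h5, h6⟩ := split_eq hr2 nr2 he1 he2 hpq
  -- h5 : e⁻¹ = e, h6 : p⁻¹ = q
  have hee : e = 1 := eq_one_of_self_inv h5
  subst hee
  simp at he2
  omega


/-! ### Positional encoding of words -/

lemma digit_unique {K a b e1 e2 : ℕ} (hK : 0 < K) (h1 : e1 < K) (h2 : e2 < K)
    (he : a * K + e1 = b * K + e2) : a = b ∧ e1 = e2 := by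
  rcases Nat.lt_trichotomy a b with h | h | h
  · exfalso
    have hm : a * K + K ≤ b * K := by
      calc a * K + K = (a + 1) * K := by ring
        _ ≤ b * K := Nat.mul_le_mul_right K (by omega)
    omega
  · subst h; omega
  · exfalso
    have hm : b * K + K ≤ a * K := by
      calc b * K + K = (b + 1) * K := by ring
        _ ≤ a * K := Nat.mul_le_mul_right K (by omega)
    omega

section Enc

variable (B : ℕ) (dg : α × Bool → ℕ)

/-- Base-`B` positional encoding of a word. -/
def enc (L : List (α × Bool)) : ℕ := L.foldl (fun a c => a * B + dg c) 0

lemma enc_foldl : ∀ (L : List (α × Bool)) (a : ℕ),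
    L.foldl (fun a c => a * B + dg c) a = a * B ^ L.length + enc B dg L := by
  intro L
  induction L with
  | nil => intro a; simp [enc]
  | cons t T ih =>
    intro a
    have h0 : enc B dg (t :: T) = List.foldl (fun a c => a * B + dg c) (0 * B + dg t) T := rfl
    rw [List.foldl_cons, ih, h0, ih (0 * B + dg t), List.length_cons, pow_succ]
    ring

lemma enc_cons (t : α × Bool) (T : List (α × Bool)) :
    enc B dg (t :: T) = dg t * B ^ T.length + enc B dg T := by
  have h0 : enc B dg (t :: T) = List.foldl (fun a c => a * B + dg c) (0 * B + dg t) T := rfl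
  rw [h0, enc_foldl]
  ring

lemma enc_append (L T : List (α × Bool)) :
    enc B dg (L ++ T) = enc B dg L * B ^ T.length + enc B dg T := by
  have h0 : enc B dg (L ++ T) = List.foldl (fun a c => a * B + dg c) (enc B dg L) T := by
    rw [enc, List.foldl_append]; rfl
  rw [h0, enc_foldl]

lemma enc_lt (h : ∀ c, dg c < B) : ∀ L : List (α × Bool), enc B dg L < B ^ L.length := by
  intro L
  induction L with
  | nil => simp [enc]
  | cons t T ih =>
    rw [enc_cons, List.length_cons, pow_succ]
    have h2 : dg t < B := h t
    calc dg t * B ^ T.length + enc B dg T < dg t * B ^ T.length + B ^ T.length := by omega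
      _ = (dg t + 1) * B ^ T.length := by ring
      _ ≤ B * B ^ T.length := Nat.mul_le_mul_right _ (by omega)
      _ = B ^ T.length * B := by ring

lemma enc_inj (h : ∀ c, dg c < B) (hdg : Function.Injective dg) :
    ∀ L₁ L₂ : List (α × Bool), L₁.length = L₂.length → enc B dg L₁ = enc B dg L₂ →
      L₁ = L₂ := by
  intro L₁
  induction L₁ with
  | nil =>
    intro L₂ hl _
    cases L₂ with
    | nil => rfl
    | cons t T => simp at hl
  | cons t T ih =>
    intro L₂ hl he
    cases L₂ with
    | nil => simp at hl
    | cons t' T' =>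
      simp only [List.length_cons, Nat.succ.injEq] at hl
      rw [enc_cons, enc_cons, hl] at he
      have hb1 : enc B dg T < B ^ T.length := enc_lt B dg h T
      have hb2 : enc B dg T' < B ^ T'.length := enc_lt B dg h T'
      rw [hl] at hb1
      have hK : 0 < B ^ T'.length := by
        have : 0 < B := by have := h t; omega
        positivity
      obtain ⟨h5, h6⟩ := digit_unique hK hb1 hb2 he
      have : t = t' := hdg h5
      subst this
      rw [ih T' hl h6]

lemma enc_cancel_right (hB : 0 < B) {P Q T : List (α × Bool)}
    (hle : enc B dg (P ++ T) ≤ enc B dg (Q ++ T)) : enc B dg P ≤ enc B dg Q := by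
  rw [enc_append, enc_append] at hle
  have hK : 0 < B ^ T.length := by positivity
  exact Nat.le_of_mul_le_mul_right (by omega) hK

end Enc


/-! ### The Nielsen generating set and elementary automorphisms -/

section Aut

variable {n : ℕ}

open FreeGroup

/-- The set of elementary Nielsen automorphisms. -/
def NSet (n : ℕ) : Set (MulAut (FreeGroup (Fin n))) :=
  {φ : MulAut (FreeGroup (Fin n)) |
    (∃ i : Fin n, ∀ j : Fin n,
      φ (FreeGroup.of j) = if j = i then (FreeGroup.of i)⁻¹ else FreeGroup.of j) ∨
    (∃ i j : Fin n, i ≠ j ∧ ∀ k : Fin n,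
      φ (FreeGroup.of k) =
        if k = i then FreeGroup.of j else if k = j then FreeGroup.of i
        else FreeGroup.of k) ∨
    (∃ i j : Fin n, i ≠ j ∧ ∀ k : Fin n,
      φ (FreeGroup.of k) =
        if k = i then FreeGroup.of i * FreeGroup.of j else FreeGroup.of k)}

/-- The subgroup generated by the elementary Nielsen automorphisms. -/
def HGrp (n : ℕ) : Subgroup (MulAut (FreeGroup (Fin n))) := Subgroup.closure (NSet n)

lemma aut_ext {f g : MulAut (FreeGroup (Fin n))} (h : ∀ i, f (of i) = g (of i)) : f = g := by
  have h2 : (f : FreeGroup (Fin n) →* FreeGroup (Fin n))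
      = (g : FreeGroup (Fin n) →* FreeGroup (Fin n)) := FreeGroup.ext_hom _ _ h
  exact MulEquiv.ext fun x => DFunLike.congr_fun h2 x

/-- Build an automorphism of the free group from mutually-inverse generator assignments. -/
def mkAut (f g : Fin n → FreeGroup (Fin n))
    (h1 : ∀ i, FreeGroup.lift g (f i) = of i) (h2 : ∀ i, FreeGroup.lift f (g i) = of i) :
    MulAut (FreeGroup (Fin n)) :=
  MonoidHom.toMulEquiv (FreeGroup.lift f) (FreeGroup.lift g)
    (FreeGroup.ext_hom _ _ (by intro a; simp [FreeGroup.lift_apply_of, h1 a]))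
    (FreeGroup.ext_hom _ _ (by intro a; simp [FreeGroup.lift_apply_of, h2 a]))

lemma mkAut_apply (f g : Fin n → FreeGroup (Fin n)) (h1 h2) (x : FreeGroup (Fin n)) :
    mkAut f g h1 h2 x = FreeGroup.lift f x := rfl

/-- A generator or its inverse. -/
def gp (c : Fin n × Bool) : FreeGroup (Fin n) := cond c.2 (of c.1) (of c.1)⁻¹

lemma gp_inv (i : Fin n) (b : Bool) : (gp (i, !b))⁻¹ = gp (i, b) := by
  cases b <;> simp [gp]

lemma gp_inv' (i : Fin n) (b : Bool) : (gp (i, b))⁻¹ = gp (i, !b) := by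
  cases b <;> simp [gp]

/-- The automorphism inverting the `i`-th generator. -/
def invAut (i : Fin n) : MulAut (FreeGroup (Fin n)) :=
  mkAut (fun j => if j = i then (of i)⁻¹ else of j) (fun j => if j = i then (of i)⁻¹ else of j)
    (by intro j
        by_cases hj : j = i
        · subst hj; simp [FreeGroup.lift_apply_of]
        · simp [hj, FreeGroup.lift_apply_of])
    (by intro j
        by_cases hj : j = i
        · subst hj; simp [FreeGroup.lift_apply_of]
        · simp [hj, FreeGroup.lift_apply_of])

lemma invAut_apply (i j : Fin n) :
    invAut i (of j) = if j = i then (of i)⁻¹ else of j := by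
  rw [invAut, mkAut_apply, FreeGroup.lift_apply_of]

lemma invAut_mem (i : Fin n) : invAut i ∈ HGrp n :=
  Subgroup.subset_closure (Or.inl ⟨i, fun j => invAut_apply i j⟩)

/-- The automorphism sending the `i`-th generator to `of i * of j`. -/
def rmulAut (i j : Fin n) (hij : i ≠ j) : MulAut (FreeGroup (Fin n)) :=
  mkAut (fun k => if k = i then of i * of j else of k)
    (fun k => if k = i then of i * (of j)⁻¹ else of k)
    (by intro k
        by_cases hk : k = i
        · subst hk; simp [FreeGroup.lift_apply_of, hij, (Ne.symm hij)]
        · simp [hk, FreeGroup.lift_apply_of])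
    (by intro k
        by_cases hk : k = i
        · subst hk; simp [FreeGroup.lift_apply_of, hij, (Ne.symm hij)]
        · simp [hk, FreeGroup.lift_apply_of])

lemma rmulAut_apply (i j : Fin n) (hij : i ≠ j) (k : Fin n) :
    rmulAut i j hij (of k) = if k = i then of i * of j else of k := by
  rw [rmulAut, mkAut_apply, FreeGroup.lift_apply_of]

lemma rmulAut_mem (i j : Fin n) (hij : i ≠ j) : rmulAut i j hij ∈ HGrp n :=
  Subgroup.subset_closure (Or.inr (Or.inr ⟨i, j, hij, fun k => rmulAut_apply i j hij k⟩))

/-- The swap automorphism. -/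
def swapAut (i j : Fin n) : MulAut (FreeGroup (Fin n)) :=
  freeGroupCongr (Equiv.swap i j)

lemma swapAut_apply (i j k : Fin n) : swapAut i j (of k) = of (Equiv.swap i j k) := by
  simp [swapAut, freeGroupCongr_apply, FreeGroup.map.of]

lemma swapAut_mem (i j : Fin n) (hij : i ≠ j) : swapAut i j ∈ HGrp n := by
  refine Subgroup.subset_closure (Or.inr (Or.inl ⟨i, j, hij, ?_⟩))
  intro k
  rw [swapAut_apply]
  by_cases hk : k = i
  · subst hk; simp [Equiv.swap_apply_left]
  · by_cases hk2 : k = j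
    · subst hk2; simp [Equiv.swap_apply_right, hk]
    · simp [hk, hk2, Equiv.swap_apply_of_ne_of_ne]

lemma exists_rmul_move (i j : Fin n) (hij : i ≠ j) (b : Bool) :
    ∃ E ∈ HGrp n, ∀ k, E (of k) = if k = i then of i * gp (j, b) else of k := by
  cases b
  · refine ⟨invAut j * rmulAut i j hij * invAut j,
      mul_mem (mul_mem (invAut_mem j) (rmulAut_mem i j hij)) (invAut_mem j), ?_⟩
    intro k
    rw [MulAut.mul_apply, MulAut.mul_apply]
    by_cases hk : k = i
    · subst hk
      simp [invAut_apply, rmulAut_apply, hij, Ne.symm hij, gp,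
        _root_.map_mul, _root_.map_inv]
    · by_cases hk2 : k = j
      · subst hk2
        simp [invAut_apply, rmulAut_apply, hij, Ne.symm hij, hk, gp,
          _root_.map_mul, _root_.map_inv]
      · simp [invAut_apply, rmulAut_apply, hij, Ne.symm hij, hk, hk2, gp,
          _root_.map_mul, _root_.map_inv]
  · refine ⟨rmulAut i j hij, rmulAut_mem i j hij, ?_⟩
    intro k
    rw [rmulAut_apply]
    rfl

lemma exists_lmul_move (i j : Fin n) (hij : i ≠ j) (b : Bool) :
    ∃ E ∈ HGrp n, ∀ k, E (of k) = if k = i then gp (j, b) * of i else of k := by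
  obtain ⟨E', hE', hE'k⟩ := exists_rmul_move i j hij (!b)
  refine ⟨invAut i * E' * invAut i,
    mul_mem (mul_mem (invAut_mem i) hE') (invAut_mem i), ?_⟩
  intro k
  rw [MulAut.mul_apply, MulAut.mul_apply]
  by_cases hk : k = i
  · subst hk
    have h1 : invAut k (of k) = (of k)⁻¹ := by simp [invAut_apply]
    have h2 : E' ((of k)⁻¹) = (of k * gp (j, !b))⁻¹ := by
      rw [_root_.map_inv, hE'k]; simp
    have h3 : invAut k ((of k * gp (j, !b))⁻¹) = gp (j, b) * of k := by
      rw [_root_.map_inv, _root_.map_mul, invAut_apply]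
      have hgp : invAut k (gp (j, !b)) = gp (j, !b) := by
        cases b <;> simp [gp, _root_.map_inv, invAut_apply, Ne.symm hij]
      rw [hgp]
      simp [mul_inv_rev, gp_inv]
    rw [h1, h2, h3]
    simp
  · have h1 : invAut i (of k) = of k := by simp [invAut_apply, hk]
    have h2 : E' (of k) = of k := by rw [hE'k]; simp [hk]
    rw [h1, h2, h1]
    simp [hk]

/-- The universal slot move: multiply the (oriented) `s`-slot on the right by the
oriented `t`-slot. -/
lemma exists_pair_move (ψ : MulAut (FreeGroup (Fin n))) (s t : Fin n) (a b : Bool)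
    (hst : s ≠ t) :
    ∃ E ∈ HGrp n, (ψ * E) (gp (s, a)) = ψ (gp (s, a)) * ψ (gp (t, b)) ∧
      ∀ k, k ≠ s → (ψ * E) (of k) = ψ (of k) := by
  cases a
  · obtain ⟨E, hE, hEk⟩ := exists_lmul_move s t hst (!b)
    refine ⟨E, hE, ?_, ?_⟩
    · have h1 : E (of s) = gp (t, !b) * of s := by rw [hEk]; simp
      have h2 : (ψ * E) (of s) = ψ (gp (t, !b)) * ψ (of s) := by
        rw [MulAut.mul_apply, h1, _root_.map_mul]
      show (ψ * E) ((of s)⁻¹) = ψ ((of s)⁻¹) * ψ (gp (t, b))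
      rw [_root_.map_inv, h2, mul_inv_rev, _root_.map_inv, ← gp_inv t b, _root_.map_inv]
    · intro k hk
      rw [MulAut.mul_apply, hEk]
      simp [hk]
  · obtain ⟨E, hE, hEk⟩ := exists_rmul_move s t hst b
    refine ⟨E, hE, ?_, ?_⟩
    · have h1 : E (of s) = of s * gp (t, b) := by rw [hEk]; simp
      show (ψ * E) (of s) = ψ (of s) * ψ (gp (t, b))
      rw [MulAut.mul_apply, h1, _root_.map_mul]
    · intro k hk
      rw [MulAut.mul_apply, hEk]
      simp [hk]

end Aut


/-! ### Measures and the Nielsen-minimal element -/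

section Min

variable {n : ℕ}

open FreeGroup

/-- Digit encoding of a letter. -/
def dgF (n : ℕ) (c : Fin n × Bool) : ℕ := 2 * c.1.1 + (cond c.2 1 0)

lemma dgF_lt (c : Fin n × Bool) : dgF n c < 2 * n + 1 := by
  obtain ⟨i, b⟩ := c
  have := i.isLt
  cases b <;> simp [dgF] <;> omega

lemma dgF_inj : Function.Injective (dgF n) := by
  rintro ⟨i, b⟩ ⟨i', b'⟩ h
  cases b <;> cases b' <;> simp [dgF] at h
  · exact congrArg (fun t => (t, false)) (Fin.ext (by omega))
  · omega
  · omega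
  · exact congrArg (fun t => (t, true)) (Fin.ext (by omega))

/-- The encoding of a word over `Fin n`. -/
def encF (n : ℕ) (L : List (Fin n × Bool)) : ℕ := enc (2 * n + 1) (dgF n) L

lemma encF_cancel_right {P Q T : List (Fin n × Bool)}
    (hle : encF n (P ++ T) ≤ encF n (Q ++ T)) : encF n P ≤ encF n Q :=
  enc_cancel_right _ _ (by omega) hle

lemma encF_inj {L₁ L₂ : List (Fin n × Bool)} (hl : L₁.length = L₂.length)
    (he : encF n L₁ = encF n L₂) : L₁ = L₂ :=
  enc_inj _ _ dgF_lt dgF_inj L₁ L₂ hl he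

/-- Half (rounded up) of the length of an element. -/
def hlf (x : FreeGroup (Fin n)) : ℕ := (ln x + 1) / 2

lemma hlf_inv (x : FreeGroup (Fin n)) : hlf x⁻¹ = hlf x := by rw [hlf, hlf, ln_inv]

/-- The secondary weight of an element. -/
def wtF (x : FreeGroup (Fin n)) : ℕ :=
  encF n (x.toWord.take (hlf x)) + encF n (x⁻¹.toWord.take (hlf x))

lemma wtF_inv (x : FreeGroup (Fin n)) : wtF x⁻¹ = wtF x := by
  rw [wtF, wtF, hlf_inv, inv_inv, add_comm]

/-- Primary measure of an automorphism. -/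
def msr1 (ψ : MulAut (FreeGroup (Fin n))) : ℕ := ∑ i : Fin n, ln (ψ (of i))

/-- Secondary measure of an automorphism. -/
def msr2 (ψ : MulAut (FreeGroup (Fin n))) : ℕ := ∑ i : Fin n, wtF (ψ (of i))

lemma ln_gp_slot (χ : MulAut (FreeGroup (Fin n))) (s : Fin n) (a : Bool) :
    ln (χ (gp (s, a))) = ln (χ (of s)) := by
  cases a
  · show ln (χ ((of s)⁻¹)) = _
    rw [_root_.map_inv, ln_inv]
  · rfl

lemma wtF_gp_slot (χ : MulAut (FreeGroup (Fin n))) (s : Fin n) (a : Bool) :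
    wtF (χ (gp (s, a))) = wtF (χ (of s)) := by
  cases a
  · show wtF (χ ((of s)⁻¹)) = _
    rw [_root_.map_inv, wtF_inv]
  · rfl

lemma sum_slot_le {f g : Fin n → ℕ} {s : Fin n} (hoff : ∀ k, k ≠ s → f k = g k)
    (hsum : ∑ k, g k ≤ ∑ k, f k) : g s ≤ f s := by
  have h1 : f s + ∑ k ∈ Finset.univ.erase s, f k = ∑ k, f k :=
    Finset.add_sum_erase _ f (Finset.mem_univ s)
  have h2 : g s + ∑ k ∈ Finset.univ.erase s, g k = ∑ k, g k :=
    Finset.add_sum_erase _ g (Finset.mem_univ s)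
  have h3 : ∑ k ∈ Finset.univ.erase s, f k = ∑ k ∈ Finset.univ.erase s, g k :=
    Finset.sum_congr rfl (fun k hk => hoff k (Finset.ne_of_mem_erase hk))
  omega

lemma sum_eq_of_all_eq {f g : Fin n → ℕ} (h : ∀ k, f k = g k) : ∑ k, f k = ∑ k, g k :=
  Finset.sum_congr rfl (fun k _ => h k)

/-- Reachability from `φ` through the Nielsen subgroup. -/
def Reach (φ ψ : MulAut (FreeGroup (Fin n))) : Prop := φ⁻¹ * ψ ∈ HGrp n

lemma reach_self (φ : MulAut (FreeGroup (Fin n))) : Reach φ φ := by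
  rw [Reach, inv_mul_cancel]
  exact one_mem _

lemma reach_mul {φ ψ E : MulAut (FreeGroup (Fin n))} (h : Reach φ ψ) (hE : E ∈ HGrp n) :
    Reach φ (ψ * E) := by
  rw [Reach, ← mul_assoc]
  exact mul_mem h hE

/-- Existence of a Nielsen-minimal automorphism in the coset of `φ`. -/
lemma exists_min (φ : MulAut (FreeGroup (Fin n))) :
    ∃ ψ, Reach φ ψ ∧ (∀ ψ', Reach φ ψ' → msr1 ψ ≤ msr1 ψ') ∧
      (∀ ψ', Reach φ ψ' → msr1 ψ' = msr1 ψ → msr2 ψ ≤ msr2 ψ') := by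
  classical
  have hne1 : (msr1 '' {ψ | Reach φ ψ}).Nonempty := ⟨msr1 φ, φ, reach_self φ, rfl⟩
  obtain ⟨ψ₁, hψ₁, hm1⟩ := Nat.sInf_mem hne1
  have hne2 : (msr2 '' {ψ | Reach φ ψ ∧ msr1 ψ = msr1 ψ₁}).Nonempty :=
    ⟨msr2 ψ₁, ψ₁, ⟨hψ₁, rfl⟩, rfl⟩
  obtain ⟨ψ₂, ⟨hψ₂, hψ₂m⟩, hm2⟩ := Nat.sInf_mem hne2
  refine ⟨ψ₂, hψ₂, ?_, ?_⟩
  · intro ψ' hψ'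
    rw [hψ₂m, hm1]
    exact Nat.sInf_le ⟨ψ', hψ', rfl⟩
  · intro ψ' hψ' hmeq
    rw [hm2]
    exact Nat.sInf_le ⟨ψ', ⟨hψ', by rw [hmeq, hψ₂m]⟩, rfl⟩

section MinProps

variable {φ ψ : MulAut (FreeGroup (Fin n))}
variable (hre : Reach φ ψ)
variable (hmin1 : ∀ ψ', Reach φ ψ' → msr1 ψ ≤ msr1 ψ')
variable (hmin2 : ∀ ψ', Reach φ ψ' → msr1 ψ' = msr1 ψ → msr2 ψ ≤ msr2 ψ')

/-- The tuple values. -/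
local notation "vv" => fun c : Fin n × Bool => ψ (gp c)

lemma v_ne_one (c : Fin n × Bool) : ψ (gp c) ≠ 1 := by
  intro h
  have h2 : gp c = 1 := by
    have := (MulEquiv.injective ψ) (by rw [h, _root_.map_one] : ψ (gp c) = ψ 1)
    exact this
  rcases c with ⟨i, b⟩
  cases b
  · exact inv_ne_one.mpr (FreeGroup.of_ne_one i) h2
  · exact FreeGroup.of_ne_one i h2

lemma v_not (c : Fin n × Bool) : ψ (gp (c.1, !c.2)) = (ψ (gp c))⁻¹ := by
  rw [← _root_.map_inv]
  congr 1
  rw [← gp_inv' c.1 c.2]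

lemma v_mul_one_iff (c c' : Fin n × Bool) : ψ (gp c) * ψ (gp c') = 1 ↔ c' = (c.1, !c.2) := by
  constructor
  · intro h
    have h2 : ψ (gp c') = (ψ (gp c))⁻¹ := by
      calc ψ (gp c') = (ψ (gp c))⁻¹ * (ψ (gp c) * ψ (gp c')) := by group
        _ = (ψ (gp c))⁻¹ := by rw [h, mul_one]
    have h3 : gp c' = (gp c)⁻¹ := by
      apply MulEquiv.injective ψ
      rw [h2, _root_.map_inv]
    rcases c with ⟨i, b⟩
    rcases c' with ⟨i', b'⟩
    rw [gp_inv'] at h3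
    rcases b with _ | _ <;> rcases b' with _ | _ <;> simp [gp] at h3 ⊢
    · exact absurd h3 (by
        intro hh
        have := congrArg FreeGroup.toWord hh
        rw [toWord_inv, toWord_of, toWord_of] at this
        simp [invRev] at this)
    · exact FreeGroup.of_injective h3
    · exact FreeGroup.of_injective h3
    · exact absurd h3 (by
        intro hh
        have := congrArg FreeGroup.toWord hh
        rw [toWord_of, toWord_inv, toWord_of] at this
        simp [invRev] at this)
  · intro h
    subst h
    have := v_not (ψ := ψ) c
    rw [this]
    simp

include hre hmin1 in
/-- Condition N1 for the minimal tuple. -/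
lemma min_C1 (c c' : Fin n × Bool) (hne : ψ (gp c) * ψ (gp c') ≠ 1) :
    ln (ψ (gp c)) ≤ ln (ψ (gp c) * ψ (gp c')) ∧
      ln (ψ (gp c')) ≤ ln (ψ (gp c) * ψ (gp c')) := by
  obtain ⟨s, a⟩ := c
  obtain ⟨t, b⟩ := c'
  by_cases hst : s = t
  · subst hst
    by_cases hb : a = b
    · subst hb
      exact ⟨ln_le_ln_sq _, ln_le_ln_sq _⟩
    · exfalso
      apply hne
      rw [v_mul_one_iff]
      cases a <;> cases b <;> simp_all
  · constructor
    · obtain ⟨E, hE, hEv, hEk⟩ := exists_pair_move ψ s t a b hst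
      have hr' : Reach φ (ψ * E) := reach_mul hre hE
      have hsum := hmin1 _ hr'
      have hslot : ln (ψ (of s)) ≤ ln ((ψ * E) (of s)) := by
        refine sum_slot_le (f := fun k => ln ((ψ * E) (of k))) (g := fun k => ln (ψ (of k)))
          (s := s) ?_ hsum
        intro k hk
        rw [hEk k hk]
      calc ln (ψ (gp (s, a))) = ln (ψ (of s)) := ln_gp_slot ψ s a
        _ ≤ ln ((ψ * E) (of s)) := hslot
        _ = ln ((ψ * E) (gp (s, a))) := (ln_gp_slot (ψ * E) s a).symm
        _ = ln (ψ (gp (s, a)) * ψ (gp (t, b))) := by rw [hEv]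
    · obtain ⟨E, hE, hEv, hEk⟩ := exists_pair_move ψ t s (!b) (!a) (fun h => hst h.symm)
      have hr' : Reach φ (ψ * E) := reach_mul hre hE
      have hsum := hmin1 _ hr'
      have hslot : ln (ψ (of t)) ≤ ln ((ψ * E) (of t)) := by
        refine sum_slot_le (f := fun k => ln ((ψ * E) (of k))) (g := fun k => ln (ψ (of k)))
          (s := t) ?_ hsum
        intro k hk
        rw [hEk k hk]
      have hval : (ψ * E) (gp (t, !b)) = (ψ (gp (s, a)) * ψ (gp (t, b)))⁻¹ := by
        rw [hEv]
        have h1 := v_not (ψ := ψ) (t, b)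
        have h2 := v_not (ψ := ψ) (s, a)
        simp only at h1 h2
        rw [h1, h2, mul_inv_rev]
      calc ln (ψ (gp (t, b))) = ln (ψ (of t)) := ln_gp_slot ψ t b
        _ ≤ ln ((ψ * E) (of t)) := hslot
        _ = ln ((ψ * E) (gp (t, !b))) := (ln_gp_slot (ψ * E) t (!b)).symm
        _ = ln ((ψ (gp (s, a)) * ψ (gp (t, b)))⁻¹) := by rw [hval]
        _ = ln (ψ (gp (s, a)) * ψ (gp (t, b))) := ln_inv _

/-- Key word-level weight comparison: if the weight does not drop when replacing the
cancelled half `p⁻¹` of `u` by `q`, then `enc p ≤ enc q⁻¹`. -/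
lemma wt_step {u v p1 p q : FreeGroup (Fin n)}
    (hu : u = p1 * p⁻¹) (hnu : ln u = ln p1 + ln p)
    (huv : u * v = p1 * q) (hnuv : ln (u * v) = ln p1 + ln q)
    (hpq : ln p = ln q) (hkp : ln p ≤ ln p1)
    (hwt : wtF u ≤ wtF (u * v)) : encF n p.toWord ≤ encF n q⁻¹.toWord := by
  have hlnuv : ln (u * v) = ln u := by omega
  have hh : hlf (u * v) = hlf u := by rw [hlf, hlf, hlnuv]
  have hhle : hlf u ≤ ln p1 := by
    rw [hlf]; omega
  have hhge : ln p ≤ hlf u := by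
    rw [hlf]; omega
  -- words of u and u*v
  have nu' : ln u = ln p1 + ln p⁻¹ := by rw [ln_inv]; omega
  have w_u : u.toWord = p1.toWord ++ (p⁻¹).toWord := toWord_of_add hu nu'
  have w_uv : (u * v).toWord = p1.toWord ++ q.toWord := toWord_of_add huv hnuv
  -- words of the inverses
  have hui : u⁻¹ = p * p1⁻¹ := by rw [hu]; group
  have nui : ln u⁻¹ = ln p + ln p1⁻¹ := by rw [ln_inv, ln_inv]; omega
  have w_ui : (u⁻¹).toWord = p.toWord ++ (p1⁻¹).toWord := toWord_of_add hui nui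
  have huvi : (u * v)⁻¹ = q⁻¹ * p1⁻¹ := by rw [huv]; group
  have nuvi : ln (u * v)⁻¹ = ln q⁻¹ + ln p1⁻¹ := by
    rw [ln_inv, ln_inv, ln_inv]; omega
  have w_uvi : ((u * v)⁻¹).toWord = q⁻¹.toWord ++ (p1⁻¹).toWord := toWord_of_add huvi nuvi
  -- lengths of word pieces
  have lp1 : p1.toWord.length = ln p1 := rfl
  have lp : p.toWord.length = ln p := rfl
  have lqi : q⁻¹.toWord.length = ln p := by
    have : ln q⁻¹ = ln q := ln_inv q
    rw [← hpq] at this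
    exact this
  -- compute the takes
  have t1 : u.toWord.take (hlf u) = p1.toWord.take (hlf u) := by
    rw [w_u, List.take_append_of_le_length (by rw [lp1]; exact hhle)]
  have t2 : (u * v).toWord.take (hlf u) = p1.toWord.take (hlf u) := by
    rw [w_uv, List.take_append_of_le_length (by rw [lp1]; exact hhle)]
  have t3 : (u⁻¹).toWord.take (hlf u)
      = p.toWord ++ (p1⁻¹).toWord.take (hlf u - ln p) := by
    rw [w_ui, List.take_append, List.take_of_length_le (by rw [lp]; exact hhge),
      lp]
  have t4 : ((u * v)⁻¹).toWord.take (hlf u)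
      = q⁻¹.toWord ++ (p1⁻¹).toWord.take (hlf u - ln p) := by
    rw [w_uvi, List.take_append, List.take_of_length_le (by rw [lqi]; exact hhge),
      lqi]
  -- unfold the weights
  have hw1 : wtF u = encF n (p1.toWord.take (hlf u))
      + encF n (p.toWord ++ (p1⁻¹).toWord.take (hlf u - ln p)) := by
    rw [wtF, t1, t3]
  have hw2 : wtF (u * v) = encF n (p1.toWord.take (hlf u))
      + encF n (q⁻¹.toWord ++ (p1⁻¹).toWord.take (hlf u - ln p)) := by
    rw [wtF, hh, t2, t4]
  rw [hw1, hw2] at hwt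
  have hmain : encF n (p.toWord ++ (p1⁻¹).toWord.take (hlf u - ln p))
      ≤ encF n (q⁻¹.toWord ++ (p1⁻¹).toWord.take (hlf u - ln p)) := by omega
  exact encF_cancel_right hmain

include hre hmin1 hmin2 in
/-- Condition N2 for the minimal tuple. -/
lemma min_C2 (c₁ c₂ c₃ : Fin n × Bool) (h12 : ψ (gp c₁) * ψ (gp c₂) ≠ 1)
    (h23 : ψ (gp c₂) * ψ (gp c₃) ≠ 1) :
    ln (ψ (gp c₁)) + ln (ψ (gp c₃))
      < ln (ψ (gp c₁) * ψ (gp c₂)) + ln (ψ (gp c₂) * ψ (gp c₃)) := by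
  obtain ⟨s1, a1⟩ := c₁
  obtain ⟨s2, a2⟩ := c₂
  obtain ⟨s3, a3⟩ := c₃
  by_contra hcon
  push_neg at hcon
  obtain ⟨P1, R1, Q1, e11, e12, e13, n11, n12, n13⟩ :=
    exists_cancel (ψ (gp (s1, a1))) (ψ (gp (s2, a2)))
  obtain ⟨P2, R2, Q2, e21, e22, e23, n21, n22, n23⟩ :=
    exists_cancel (ψ (gp (s2, a2))) (ψ (gp (s3, a3)))
  obtain ⟨hc1a, hc1b⟩ := min_C1 hre hmin1 (s1, a1) (s2, a2) h12
  obtain ⟨hc2a, hc2b⟩ := min_C1 hre hmin1 (s2, a2) (s3, a3) h23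
  have hvne : ψ (gp (s2, a2)) ≠ 1 := v_ne_one (s2, a2)
  have hvln : 1 ≤ ln (ψ (gp (s2, a2))) := by
    rcases Nat.eq_zero_or_pos (ln (ψ (gp (s2, a2)))) with h | h
    · exact absurd (ln_eq_zero.mp h) hvne
    · exact h
  -- exact-half cancellations
  have hq1 : ln Q1 = ln R1 := by omega
  have hp2 : ln P2 = ln R2 := by omega
  have hk12 : ln R1 = ln R2 := by omega
  have hk1 : 1 ≤ ln R1 := by omega
  -- identify the two splittings of v
  have n12' : ln (ψ (gp (s2, a2))) = ln R1⁻¹ + ln Q1 := by rw [ln_inv]; omega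
  obtain ⟨hPR, hQR⟩ := split_eq e12 n12' e21 (by omega) (by omega)
  -- hPR : R1⁻¹ = P2, hQR : Q1 = R2
  -- exclude degenerate slots
  have hs12 : s1 ≠ s2 := by
    intro hss
    subst hss
    by_cases hab : a1 = a2
    · subst hab
      -- u = v, half of u cancels: v = 1, absurd
      have nu2 : ln (ψ (gp (s1, a1))) = ln R1⁻¹ + ln Q1 := n12'
      obtain ⟨hA, hB⟩ := split_eq e11 n11 e12 nu2 (by omega)
      -- hA : P1 = R1⁻¹, hB : R1 = Q1
      apply hvne
      rw [e12, ← hB, inv_mul_cancel]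
    · apply h12
      rw [v_mul_one_iff]
      cases a1 <;> cases a2 <;> simp_all
  have hs32 : s3 ≠ s2 := by
    intro hss
    subst hss
    by_cases hab : a3 = a2
    · subst hab
      have nw2 : ln (ψ (gp (s3, a3))) = ln R2⁻¹ + ln Q2 := by rw [ln_inv]; omega
      obtain ⟨hA, hB⟩ := split_eq e22 nw2 e21 (by omega) (by omega)
      -- hA : R2⁻¹ = P2, hB : Q2 = R2
      apply hvne
      rw [e21, ← hA, inv_mul_cancel]
    · apply h23
      rw [v_mul_one_iff]
      cases a3 <;> cases a2 <;> simp_all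
  -- Move A : slot s1, multiply by v on the right
  have hwtA : wtF (ψ (gp (s1, a1))) ≤ wtF (ψ (gp (s1, a1)) * ψ (gp (s2, a2))) := by
    obtain ⟨E, hE, hEv, hEk⟩ := exists_pair_move ψ s1 s2 a1 a2 hs12
    have hr' : Reach φ (ψ * E) := reach_mul hre hE
    have hlnslot : ln ((ψ * E) (of s1)) = ln (ψ (of s1)) := by
      rw [← ln_gp_slot (ψ * E) s1 a1, hEv, ← ln_gp_slot ψ s1 a1]
      rw [ln_gp_slot ψ s1 a1, ← ln_gp_slot ψ s1 a1]
      omega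
    have hm1eq : msr1 (ψ * E) = msr1 ψ := by
      apply sum_eq_of_all_eq
      intro k
      by_cases hk : k = s1
      · subst hk; exact hlnslot
      · rw [hEk k hk]
    have hsum := hmin2 _ hr' hm1eq
    have hslot : wtF (ψ (of s1)) ≤ wtF ((ψ * E) (of s1)) := by
      refine sum_slot_le (f := fun k => wtF ((ψ * E) (of k))) (g := fun k => wtF (ψ (of k)))
        (s := s1) ?_ hsum
      intro k hk
      rw [hEk k hk]
    calc wtF (ψ (gp (s1, a1))) = wtF (ψ (of s1)) := wtF_gp_slot ψ s1 a1
      _ ≤ wtF ((ψ * E) (of s1)) := hslot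
      _ = wtF ((ψ * E) (gp (s1, a1))) := (wtF_gp_slot (ψ * E) s1 a1).symm
      _ = wtF (ψ (gp (s1, a1)) * ψ (gp (s2, a2))) := by rw [hEv]
  -- Move B : slot s3, multiply by v⁻¹ on the right of the inverse orientation
  have hwtB : wtF (ψ (gp (s3, a3))) ≤ wtF (ψ (gp (s2, a2)) * ψ (gp (s3, a3))) := by
    obtain ⟨E, hE, hEv, hEk⟩ := exists_pair_move ψ s3 s2 (!a3) (!a2) hs32
    have hr' : Reach φ (ψ * E) := reach_mul hre hE
    have hval : (ψ * E) (gp (s3, !a3)) = (ψ (gp (s2, a2)) * ψ (gp (s3, a3)))⁻¹ := by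
      rw [hEv]
      have h1 := v_not (ψ := ψ) (s3, a3)
      have h2 := v_not (ψ := ψ) (s2, a2)
      simp only at h1 h2
      rw [h1, h2, mul_inv_rev]
    have hlnslot : ln ((ψ * E) (of s3)) = ln (ψ (of s3)) := by
      rw [← ln_gp_slot (ψ * E) s3 (!a3), hval, ln_inv, ← ln_gp_slot ψ s3 a3]
      rw [ln_gp_slot ψ s3 a3, ← ln_gp_slot ψ s3 a3]
      omega
    have hm1eq : msr1 (ψ * E) = msr1 ψ := by
      apply sum_eq_of_all_eq
      intro k
      by_cases hk : k = s3
      · subst hk; exact hlnslot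
      · rw [hEk k hk]
    have hsum := hmin2 _ hr' hm1eq
    have hslot : wtF (ψ (of s3)) ≤ wtF ((ψ * E) (of s3)) := by
      refine sum_slot_le (f := fun k => wtF ((ψ * E) (of k))) (g := fun k => wtF (ψ (of k)))
        (s := s3) ?_ hsum
      intro k hk
      rw [hEk k hk]
    calc wtF (ψ (gp (s3, a3))) = wtF (ψ (of s3)) := wtF_gp_slot ψ s3 a3
      _ ≤ wtF ((ψ * E) (of s3)) := hslot
      _ = wtF ((ψ * E) (gp (s3, !a3))) := (wtF_gp_slot (ψ * E) s3 (!a3)).symm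
      _ = wtF ((ψ (gp (s2, a2)) * ψ (gp (s3, a3)))⁻¹) := by rw [hval]
      _ = wtF (ψ (gp (s2, a2)) * ψ (gp (s3, a3))) := wtF_inv _
  -- word-level comparison, both directions
  have hq2 : ln R2 ≤ ln Q2 := by omega
  have hencA : encF n (R1⁻¹).toWord ≤ encF n (Q1⁻¹).toWord := by
    refine wt_step (v := ψ (gp (s2, a2))) ?_ ?_ e13 n13 ?_ ?_ hwtA
    · rw [inv_inv]; exact e11
    · rw [ln_inv]; exact n11
    · rw [ln_inv]; omega
    · rw [ln_inv]; omega
  rw [hQR] at hencA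
  have hvwB : ψ (gp (s2, a2)) * ψ (gp (s3, a3)) ≠ 1 := h23
  have hu' : (ψ (gp (s3, a3)))⁻¹ = Q2⁻¹ * (R2⁻¹)⁻¹ := by
    rw [inv_inv, e22, mul_inv_rev, inv_inv]
  have huv' : (ψ (gp (s3, a3)))⁻¹ * (ψ (gp (s2, a2)))⁻¹ = Q2⁻¹ * P2⁻¹ := by
    rw [← mul_inv_rev, e23, mul_inv_rev]
  have hlnvw : ln ((ψ (gp (s3, a3)))⁻¹ * (ψ (gp (s2, a2)))⁻¹)
      = ln Q2⁻¹ + ln P2⁻¹ := by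
    rw [huv', ln_inv, ln_inv]
    have h9 : ln (Q2⁻¹ * P2⁻¹) = ln ((ψ (gp (s2, a2)) * ψ (gp (s3, a3)))⁻¹) := by
      rw [e23, mul_inv_rev]
    rw [h9, ln_inv]
    omega
  have hencB : encF n (R2⁻¹).toWord ≤ encF n ((P2⁻¹)⁻¹).toWord := by
    refine wt_step (v := (ψ (gp (s2, a2)))⁻¹) hu' ?_ huv' hlnvw ?_ ?_ ?_
    · simp only [ln_inv]; omega
    · simp only [ln_inv]; omega
    · simp only [ln_inv]; omega
    · rw [wtF_inv, huv', ← mul_inv_rev, ← e23, wtF_inv]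
      exact hwtB
  rw [inv_inv, ← hPR] at hencB
  -- conclude R1 = R2, hence v = 1
  have henc : encF n (R1⁻¹).toWord = encF n (R2⁻¹).toWord := le_antisymm hencA hencB
  have hlen : (R1⁻¹).toWord.length = (R2⁻¹).toWord.length := by
    have h1 : ln R1⁻¹ = ln R2⁻¹ := by simp only [ln_inv]; omega
    exact h1
  have hww : (R1⁻¹).toWord = (R2⁻¹).toWord := encF_inj hlen henc
  have hRR : R1 = R2 := inv_injective (toWord_injective hww)
  apply hvne
  rw [e12, hQR, hRR, inv_mul_cancel]

end MinProps



end Min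


/-! ### The key length estimate for Nielsen-reduced tuples -/

section KeyEstimate

variable {n : ℕ}

open FreeGroup

/-- Product of the values of a word. -/
def prodV (v : Fin n × Bool → FreeGroup (Fin n)) (L : List (Fin n × Bool)) :
    FreeGroup (Fin n) := (L.map v).prod

lemma prodV_append (v : Fin n × Bool → FreeGroup (Fin n)) (L M : List (Fin n × Bool)) :
    prodV v (L ++ M) = prodV v L * prodV v M := by
  simp [prodV]

lemma prodV_singleton (v : Fin n × Bool → FreeGroup (Fin n)) (c : Fin n × Bool) :
    prodV v [c] = v c := by simp [prodV]

variable {v : Fin n × Bool → FreeGroup (Fin n)}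

lemma adj_prod_ne_one (hinj : Function.Injective v)
    (hv_not : ∀ c : Fin n × Bool, v (c.1, !c.2) = (v c)⁻¹)
    {c c' : Fin n × Bool} (h : ¬(c.1 = c'.1 ∧ c.2 = !c'.2)) : v c * v c' ≠ 1 := by
  intro h1
  apply h
  have h2 : v c' = (v c)⁻¹ := by
    calc v c' = (v c)⁻¹ * (v c * v c') := by group
      _ = (v c)⁻¹ := by rw [h1, mul_one]
  have h3 : v c' = v (c.1, !c.2) := by rw [hv_not c]; exact h2
  have h4 : c' = (c.1, !c.2) := hinj h3
  constructor
  · rw [h4]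
  · rw [h4]; simp

variable (hinj : Function.Injective v)
    (hv_not : ∀ c : Fin n × Bool, v (c.1, !c.2) = (v c)⁻¹)
    (C0 : ∀ c, v c ≠ 1)
    (C1 : ∀ c c', v c * v c' ≠ 1 →
      ln (v c) ≤ ln (v c * v c') ∧ ln (v c') ≤ ln (v c * v c'))
    (C2 : ∀ c₁ c₂ c₃, v c₁ * v c₂ ≠ 1 → v c₂ * v c₃ ≠ 1 →
      ln (v c₁) + ln (v c₃) < ln (v c₁ * v c₂) + ln (v c₂ * v c₃))

include C0 in
lemma ln_v_pos (c : Fin n × Bool) : 1 ≤ ln (v c) := by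
  rcases Nat.eq_zero_or_pos (ln (v c)) with h | h
  · exact absurd (ln_eq_zero.mp h) (C0 c)
  · exact h

include hinj hv_not C0 C1 C2 in
lemma key_aux : ∀ (L : List (Fin n × Bool)) (c : Fin n × Bool), Rd (L ++ [c]) →
    ∃ y z s : FreeGroup (Fin n),
      prodV v (L ++ [c]) = y * z ∧ ln (prodV v (L ++ [c])) = ln y + ln z ∧
      v c = s * z ∧ ln (v c) = ln s + ln z ∧
      L.length ≤ ln y ∧
      (s = 1 ∨ ∃ c', v c' * v c ≠ 1 ∧
        2 * ln s + ln (v c' * v c) ≤ ln (v c') + ln (v c)) := by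
  intro L
  induction L using List.reverseRecOn with
  | nil =>
    intro c _
    exact ⟨1, v c, 1, by simp [prodV], by simp [prodV], by simp, by simp, by simp, Or.inl rfl⟩
  | append_singleton M c' ih =>
    intro c hrd
    have hrd' : Rd (M ++ [c']) := hrd.infix ⟨[], [c], by simp⟩
    obtain ⟨y, z, s, h1, h2, h3, h4, h5, h6⟩ := ih c' hrd'
    have hadj : ¬(c'.1 = c.1 ∧ c'.2 = !c.2) := by
      have h9 : Rd [c', c] := hrd.infix ⟨M, [], by simp⟩
      exact (List.isChain_cons_cons.mp h9).1
    have hcc : v c' * v c ≠ 1 := adj_prod_ne_one hinj hv_not hadj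
    obtain ⟨g1, g2⟩ := C1 c' c hcc
    obtain ⟨P1, R, Q, f1, f2, f3, m1, m2, m3⟩ := exists_cancel (prodV v (M ++ [c'])) (v c)
    have hprod : prodV v ((M ++ [c']) ++ [c]) = prodV v (M ++ [c']) * v c := by
      rw [prodV_append, prodV_singleton]
    -- the cancelled part `R` does not reach past `z`
    have hRz : ln R ≤ ln z := by
      by_contra hlt
      push_neg at hlt
      obtain ⟨e, he1, he2, he3, he4⟩ := split_nest f1 m1 h1 h2 (le_of_lt hlt)
      -- he1 : R = e * z, he3 : y = P1 * e
      have hvv : v c' * v c = s * (e⁻¹ * Q) := by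
        rw [h3, f2, he1]
        group
      have hb : ln (v c' * v c) ≤ ln s + (ln e + ln Q) := by
        rw [hvv]
        calc ln (s * (e⁻¹ * Q)) ≤ ln s + ln (e⁻¹ * Q) := ln_mul_le _ _
          _ ≤ ln s + (ln e⁻¹ + ln Q) := by have := ln_mul_le e⁻¹ Q; omega
          _ = ln s + (ln e + ln Q) := by rw [ln_inv]
      rcases h6 with rfl | ⟨c'', hc'', hineq⟩
      · -- s = 1 : then ln z = ln (v c') and the estimate collapses
        have hvcp := ln_v_pos C0 c'
        simp only [ln_one] at h4 hb
        omega
      · obtain ⟨g3, g4⟩ := C1 c'' c' hc''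
        have hC2 := C2 c'' c' c hc'' hcc
        omega
    obtain ⟨e, he1, he2, he3, he4⟩ := split_nest h1 h2 f1 m1 hRz
    -- he1 : z = e * R, he3 : P1 = y * e
    have hvv : v c' * v c = s * (e * Q) := by
      rw [h3, f2, he1]
      group
    have hb : ln (v c' * v c) ≤ ln s + (ln e + ln Q) := by
      rw [hvv]
      calc ln (s * (e * Q)) ≤ ln s + ln (e * Q) := ln_mul_le _ _
        _ ≤ ln s + (ln e + ln Q) := by have := ln_mul_le e Q; omega
    -- strict growth : ln R < ln z
    have hRstrict : ln R < ln z := by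
      rcases h6 with rfl | ⟨c'', hc'', hineq⟩
      · have hvcp := ln_v_pos C0 c'
        simp only [ln_one] at h4 hb
        omega
      · obtain ⟨g3, g4⟩ := C1 c'' c' hc''
        have hC2 := C2 c'' c' c hc'' hcc
        omega
    refine ⟨y * e, Q, R⁻¹, ?_, ?_, ?_, ?_, ?_, Or.inr ⟨c', hcc, ?_⟩⟩
    · rw [hprod, f3, he3]
    · rw [hprod, m3, he3]
    · rw [f2]
    · rw [ln_inv]
      exact m2
    · have hye : ln (y * e) = ln y + ln e := by rw [← he3]; omega
      simp only [List.length_append, List.length_singleton]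
      omega
    · rw [ln_inv]
      omega

include hinj hv_not C0 C1 C2 in
/-- The key estimate : a reduced product of `m` tuple elements has length at least `m`. -/
lemma key_estimate (L : List (Fin n × Bool)) (hL : Rd L) :
    L.length ≤ ln (prodV v L) := by
  rcases List.eq_nil_or_concat L with rfl | ⟨M, c, rfl⟩
  · simp [prodV]
  · rw [List.concat_eq_append] at hL ⊢
    obtain ⟨y, z, s, h1, h2, h3, h4, h5, h6⟩ := key_aux hinj hv_not C0 C1 C2 M c hL
    have hzpos : 1 ≤ ln z := by
      have hvcp := ln_v_pos C0 c
      rcases h6 with rfl | ⟨c'', hc'', hineq⟩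
      · simp only [ln_one] at h4
        omega
      · obtain ⟨g3, g4⟩ := C1 c'' c hc''
        omega
    simp only [List.length_append, List.length_singleton]
    omega

end KeyEstimate


/-! ### Endgame -/

section Endgame

variable {n : ℕ}

open FreeGroup

lemma of_ne_inv_of (i j : Fin n) : (of i : FreeGroup (Fin n)) ≠ (of j)⁻¹ := by
  intro h
  have h2 := congrArg FreeGroup.toWord h
  rw [toWord_of, toWord_inv, toWord_of] at h2
  simp [invRev] at h2

lemma gp_inj : Function.Injective (gp (n := n)) := by
  rintro ⟨i, b⟩ ⟨i', b'⟩ h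
  cases b <;> cases b'
  · have h2 : ((of i : FreeGroup (Fin n)))⁻¹ = (of i')⁻¹ := h
    rw [FreeGroup.of_injective (inv_injective h2)]
  · have h2 : ((of i : FreeGroup (Fin n)))⁻¹ = of i' := h
    exact absurd h2.symm (of_ne_inv_of i' i)
  · have h2 : (of i : FreeGroup (Fin n)) = (of i')⁻¹ := h
    exact absurd h2 (of_ne_inv_of i i')
  · have h2 : (of i : FreeGroup (Fin n)) = of i' := h
    rw [FreeGroup.of_injective h2]

/-- An automorphism applied to `mk L` is the product of the images of the letters. -/
lemma aut_mk_prodV (ψ : MulAut (FreeGroup (Fin n))) (L : List (Fin n × Bool)) :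
    ψ (mk L) = prodV (fun c => ψ (gp c)) L := by
  have hlift : ∀ x, ψ x = FreeGroup.lift (fun i => ψ (of i)) x := by
    intro x
    have h2 : (ψ : FreeGroup (Fin n) →* FreeGroup (Fin n))
        = FreeGroup.lift (fun i => ψ (of i)) :=
      FreeGroup.ext_hom _ _ (fun a => by rw [FreeGroup.lift_apply_of]; rfl)
    exact DFunLike.congr_fun h2 x
  rw [hlift, FreeGroup.lift_mk, prodV]
  congr 1
  apply List.map_congr_left
  intro c _
  cases hc : c.2
  · have hgp : gp c = (of c.1)⁻¹ := by simp [gp, hc]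
    rw [hgp, _root_.map_inv]
    rfl
  · have hgp : gp c = of c.1 := by simp [gp, hc]
    rw [hgp]
    rfl

/-- Permutation automorphisms lie in the Nielsen subgroup. -/
lemma congr_mem (e : Equiv.Perm (Fin n)) :
    (freeGroupCongr e : MulAut (FreeGroup (Fin n))) ∈ HGrp n := by
  have hof : ∀ (f : Equiv.Perm (Fin n)) (i : Fin n),
      (freeGroupCongr f : MulAut (FreeGroup (Fin n))) (of i) = of (f i) := by
    intro f i
    simp [freeGroupCongr_apply, FreeGroup.map.of]
  refine Equiv.Perm.swap_induction_on e ?_ ?_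
  · have h1 : (freeGroupCongr (1 : Equiv.Perm (Fin n)) : MulAut (FreeGroup (Fin n))) = 1 := by
      apply aut_ext
      intro i
      rw [hof]
      rfl
    rw [h1]
    exact one_mem _
  · intro f x y hxy ihf
    have hmul : (freeGroupCongr (Equiv.swap x y * f) : MulAut (FreeGroup (Fin n)))
        = swapAut x y * freeGroupCongr f := by
      apply aut_ext
      intro i
      rw [hof, MulAut.mul_apply, hof, swapAut_apply]
      rfl
    rw [hmul]
    exact mul_mem (swapAut_mem x y hxy) ihf

/-- Sign automorphisms lie in the Nielsen subgroup. -/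
lemma sign_mem (T : Finset (Fin n)) :
    ∀ ψ : MulAut (FreeGroup (Fin n)),
      (∀ k, ψ (of k) = if k ∈ T then (of k)⁻¹ else of k) → ψ ∈ HGrp n := by
  classical
  induction T using Finset.induction_on with
  | empty =>
    intro ψ hψ
    have h1 : ψ = 1 := aut_ext (fun i => by rw [hψ]; simp)
    rw [h1]
    exact one_mem _
  | @insert a T ha ih =>
    intro ψ hψ
    have hψ' : ∀ k, (invAut a * ψ) (of k) = if k ∈ T then (of k)⁻¹ else of k := by
      intro k
      rw [MulAut.mul_apply, hψ]
      by_cases hk : k = a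
      · subst hk
        simp only [Finset.mem_insert, true_or, if_pos]
        rw [if_neg ha, _root_.map_inv, invAut_apply]
        simp
      · have hk3 : k ∈ insert a T ↔ k ∈ T := by simp [hk]
        by_cases hk2 : k ∈ T
        · rw [if_pos (hk3.mpr hk2), if_pos hk2, _root_.map_inv, invAut_apply, if_neg hk]
        · rw [if_neg (fun hq => hk2 (hk3.mp hq)), if_neg hk2, invAut_apply, if_neg hk]
    have hmem := ih _ hψ'
    have heq : ψ = (invAut a)⁻¹ * (invAut a * ψ) := by group
    rw [heq]
    exact mul_mem (inv_mem (invAut_mem a)) hmem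

/-- An automorphism sending every generator to a generator or an inverse generator
lies in the Nielsen subgroup. -/
lemma lenone_mem (ψ : MulAut (FreeGroup (Fin n)))
    (h : ∀ k : Fin n, ∃ c : Fin n × Bool, of k = ψ (gp c)) : ψ ∈ HGrp n := by
  classical
  choose σ0 hσ0 using h
  have hinj1 : Function.Injective (fun k => (σ0 k).1) := by
    intro k k' hkk
    dsimp at hkk
    by_cases hb : (σ0 k).2 = (σ0 k').2
    · have h1 : σ0 k = σ0 k' := Prod.ext hkk hb
      have h2 : (of k : FreeGroup (Fin n)) = of k' := by rw [hσ0, hσ0, h1]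
      exact FreeGroup.of_injective h2
    · exfalso
      have h1 : (σ0 k') = ((σ0 k).1, !(σ0 k).2) := by
        refine Prod.ext hkk.symm ?_
        cases h2 : (σ0 k).2 <;> cases h3 : (σ0 k').2 <;> simp_all
      have h2 : (of k' : FreeGroup (Fin n)) = (of k)⁻¹ := by
        rw [hσ0, hσ0, h1]
        have h4 := gp_inv' (σ0 k).1 (σ0 k).2
        rw [← h4, _root_.map_inv]
      exact of_ne_inv_of k' k h2
  have hbij : Function.Bijective (fun k => (σ0 k).1) :=
    ⟨hinj1, Finite.surjective_of_injective hinj1⟩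
  let e : Equiv.Perm (Fin n) := Equiv.ofBijective _ hbij
  have he : ∀ k, e k = (σ0 k).1 := fun k => rfl
  set ψ' : MulAut (FreeGroup (Fin n)) := ψ * (freeGroupCongr e : MulAut (FreeGroup (Fin n)))
    with hψ'def
  have hψ' : ∀ k, ψ' (of k) = if k ∈ Finset.univ.filter (fun k => (σ0 k).2 = false)
      then (of k)⁻¹ else of k := by
    intro k
    have h1 : ψ' (of k) = ψ (of ((σ0 k).1)) := by
      have hc : (freeGroupCongr e : MulAut (FreeGroup (Fin n))) (of k) = of (e k) := by
        simp [freeGroupCongr_apply, FreeGroup.map.of]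
      rw [hψ'def, MulAut.mul_apply, hc]
      rfl
    cases h2 : (σ0 k).2
    · have h3 : (of k : FreeGroup (Fin n)) = (ψ (of ((σ0 k).1)))⁻¹ := by
        rw [hσ0 k]
        have hgp : gp (σ0 k) = (of (σ0 k).1)⁻¹ := by simp [gp, h2]
        rw [hgp, _root_.map_inv]
      simp only [Finset.mem_filter, Finset.mem_univ, true_and, h2, if_pos]
      rw [h1, h3, inv_inv]
    · have h3 : (of k : FreeGroup (Fin n)) = ψ (of ((σ0 k).1)) := by
        rw [hσ0 k]
        have hgp : gp (σ0 k) = of (σ0 k).1 := by simp [gp, h2]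
        rw [hgp]
      simp only [Finset.mem_filter, Finset.mem_univ, true_and, h2]
      rw [h1, ← h3]
      simp
  have hmem' : ψ' ∈ HGrp n := sign_mem _ _ hψ'
  have heq : ψ = ψ' * (freeGroupCongr e : MulAut (FreeGroup (Fin n)))⁻¹ := by
    rw [hψ'def]; group
  rw [heq]
  exact mul_mem hmem' (inv_mem (congr_mem e))

/-- Main theorem, internal form. -/
theorem hgrp_eq_top : HGrp n = ⊤ := by
  rw [Subgroup.eq_top_iff']
  intro φ
  obtain ⟨ψ, hre, hm1, hm2⟩ := exists_min φ
  have hinj : Function.Injective (fun c : Fin n × Bool => ψ (gp c)) :=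
    fun c c' h => gp_inj (MulEquiv.injective ψ h)
  have hv_not : ∀ c : Fin n × Bool, ψ (gp (c.1, !c.2)) = (ψ (gp c))⁻¹ := v_not
  have C0' : ∀ c : Fin n × Bool, ψ (gp c) ≠ 1 := v_ne_one
  have C1' := min_C1 hre hm1
  have C2' := min_C2 hre hm1 hm2
  have hgen : ∀ k : Fin n, ∃ c : Fin n × Bool, of k = ψ (gp c) := by
    intro k
    set L := FreeGroup.toWord (ψ⁻¹ (of k)) with hLdef
    have hRd : Rd L := rd_toWord _
    have hψL : ψ (mk L) = of k := by
      rw [hLdef, mk_toWord]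
      have : ψ ((MulEquiv.symm ψ) (of k)) = of k := MulEquiv.apply_symm_apply ψ (of k)
      simpa using this
    have hest := key_estimate hinj hv_not C0' C1' C2' L hRd
    have hlen1 : ln (prodV (fun c => ψ (gp c)) L) = 1 := by
      rw [← aut_mk_prodV, hψL, ln_of]
    rcases L with _ | ⟨c, L'⟩
    · exfalso
      rw [← FreeGroup.one_eq_mk, _root_.map_one] at hψL
      exact FreeGroup.of_ne_one k hψL.symm
    · rcases L' with _ | ⟨c', L''⟩
      · refine ⟨c, ?_⟩
        rw [← hψL]
        have hmk : (mk [c] : FreeGroup (Fin n)) = gp c := by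
          obtain ⟨i, b⟩ := c
          cases b
          · have hof : (of i : FreeGroup (Fin n)) = mk [(i, true)] := rfl
            have hgp : gp ((i, false) : Fin n × Bool) = (of i)⁻¹ := by simp [gp]
            rw [hgp, hof, inv_mk, invRev_singleton]
            rfl
          · rfl
        rw [hmk]
      · exfalso
        rw [hlen1] at hest
        simp at hest
  have hψmem : ψ ∈ HGrp n := lenone_mem ψ hgen
  have heq : φ = ψ * (φ⁻¹ * ψ)⁻¹ := by group
  rw [heq]
  exact mul_mem hψmem (inv_mem hre)

end Endgame

end NielsenProof

/-- The automorphism group of the free group on `n` generators is generated by the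
elementary Nielsen automorphisms: (a) inverting a generator, (b) interchanging two
generators, and (c) multiplying a generator on the right by another generator. -/
theorem freeGroup_aut_generated_by_nielsen (n : ℕ) :
    Subgroup.closure
      {φ : MulAut (FreeGroup (Fin n)) |
        (∃ i : Fin n, ∀ j : Fin n,
          φ (FreeGroup.of j) = if j = i then (FreeGroup.of i)⁻¹ else FreeGroup.of j) ∨
        (∃ i j : Fin n, i ≠ j ∧ ∀ k : Fin n,
          φ (FreeGroup.of k) =
            if k = i then FreeGroup.of j else if k = j then FreeGroup.of i
            else FreeGroup.of k) ∨
        (∃ i j : Fin n, i ≠ j ∧ ∀ k : Fin n,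
          φ (FreeGroup.of k) =
            if k = i then FreeGroup.of i * FreeGroup.of j else FreeGroup.of k)} = ⊤ :=
  NielsenProof.hgrp_eq_top
end

section
/- The double full-rotation loop in SO(3) is null-homotopic: let δ : [0,1] → SO(3) be the loop δ(t) = the rotation about the third coordinate axis through angle 4πt, i.e. the matrix with rows (cos 4πt, −sin 4πt, 0), (sin 4πt, cos 4πt, 0), (0,0,1), so δ(0) = δ(1) = 1. Then δ, regarded as a Path in SO(3) from 1 to 1, is path-homotopic (rel endpoints) to the constant loop at the identity. -/
open Real Matrix

/-- `SO(3)`: the subgroup of the orthogonal group of `3 × 3` real matrices consisting of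
matrices of determinant `1`, topologized as a subspace of the `3 × 3` real matrices. -/
abbrev SO3 : Type := Matrix.specialOrthogonalGroup (Fin 3) ℝ

/-- The matrix of rotation about the third coordinate axis through angle `θ`. -/
noncomputable def rotMatrix (θ : ℝ) : Matrix (Fin 3) (Fin 3) ℝ :=
  !![Real.cos θ, -Real.sin θ, 0; Real.sin θ, Real.cos θ, 0; 0, 0, 1]

lemma rotMatrix_mem (θ : ℝ) : rotMatrix θ ∈ Matrix.specialOrthogonalGroup (Fin 3) ℝ := by
  rw [Matrix.mem_specialOrthogonalGroup_iff]
  constructor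
  · rw [Matrix.mem_orthogonalGroup_iff]
    ext i j
    fin_cases i <;> fin_cases j <;>
      simp [rotMatrix, Matrix.mul_apply, Matrix.star_apply, Fin.sum_univ_three,
        Matrix.one_apply] <;>
      ring_nf <;>
      simp [Real.sin_sq_add_cos_sq, Real.cos_sq_add_sin_sq]
  · simp [rotMatrix, Matrix.det_fin_three]
    ring_nf
    simp [Real.sin_sq_add_cos_sq, Real.cos_sq_add_sin_sq]

lemma rotMatrix_zero : rotMatrix 0 = 1 := by
  ext i j
  fin_cases i <;> fin_cases j <;>
    simp [rotMatrix, Matrix.one_apply, Matrix.vecHead, Matrix.vecTail]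

lemma rotMatrix_four_pi : rotMatrix (4 * π) = 1 := by
  have hc : Real.cos (4 * π) = 1 := by
    rw [show (4 : ℝ) * π = 2 * π + 2 * π by ring, Real.cos_add_two_pi, Real.cos_two_pi]
  have hs : Real.sin (4 * π) = 0 := by
    rw [show (4 : ℝ) * π = 2 * π + 2 * π by ring, Real.sin_add_two_pi, Real.sin_two_pi]
  ext i j
  fin_cases i <;> fin_cases j <;>
    simp [rotMatrix, Matrix.one_apply, hc, hs, Matrix.vecHead, Matrix.vecTail]

/-- The loop `δ(t) = ` rotation through angle `4πt` about the third coordinate axis,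
regarded as a path in `SO(3)` from the identity to the identity. -/
noncomputable def doubleRotationLoop : Path (1 : SO3) (1 : SO3) where
  toFun t := ⟨rotMatrix (4 * π * (t : ℝ)), rotMatrix_mem _⟩
  continuous_toFun := by
    apply Continuous.subtype_mk
    exact (by
      apply continuous_matrix
      intro i j
      fin_cases i <;> fin_cases j <;> simp [rotMatrix] <;> fun_prop :
        Continuous fun t : ℝ => rotMatrix (4 * π * t)).comp continuous_subtype_val
  source' := by
    apply Subtype.ext
    simp [rotMatrix_zero]
  target' := by
    apply Subtype.ext
    simp [rotMatrix_four_pi]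

/-- The rotation matrix associated to a quaternion `(a, b, c, d)`. -/
noncomputable def quatRot (a b c d : ℝ) : Matrix (Fin 3) (Fin 3) ℝ :=
  !![a^2+b^2-c^2-d^2, 2*(b*c-a*d), 2*(b*d+a*c);
     2*(b*c+a*d), a^2-b^2+c^2-d^2, 2*(c*d-a*b);
     2*(b*d-a*c), 2*(c*d+a*b), a^2-b^2-c^2+d^2]

lemma quatRot_mem {a b c d : ℝ} (h : a^2+b^2+c^2+d^2 = 1) :
    quatRot a b c d ∈ Matrix.specialOrthogonalGroup (Fin 3) ℝ := by
  rw [Matrix.mem_specialOrthogonalGroup_iff]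
  constructor
  · rw [Matrix.mem_orthogonalGroup_iff]
    ext i j
    fin_cases i <;> fin_cases j <;>
      simp [quatRot, Matrix.mul_apply, Matrix.star_apply, Fin.sum_univ_three,
        Matrix.one_apply] <;>
      first
        | linear_combination (a^2+b^2+c^2+d^2+1) * h
        | ring
  · simp only [Matrix.det_fin_three, quatRot]
    simp
    linear_combination ((a^2+b^2+c^2+d^2)^2 + (a^2+b^2+c^2+d^2) + 1) * h

lemma quatRot_one : quatRot 1 0 0 0 = 1 := by
  ext i j
  fin_cases i <;> fin_cases j <;>
    simp [quatRot, Matrix.one_apply, Matrix.vecHead, Matrix.vecTail]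

/-- Quaternion components of the contracting homotopy. -/
noncomputable def qA (s t : ℝ) : ℝ := cos (s*π/2)^2 * cos (2*π*t) + sin (s*π/2)^2
noncomputable def qB (s t : ℝ) : ℝ := cos (s*π/2) * sin (s*π/2) * (1 - cos (2*π*t))
noncomputable def qC (s t : ℝ) : ℝ := sin (s*π/2) * cos (s*π/2) * sin (2*π*t)
noncomputable def qD (s t : ℝ) : ℝ := cos (s*π/2)^2 * sin (2*π*t)

lemma q_norm (s t : ℝ) : (qA s t)^2 + (qB s t)^2 + (qC s t)^2 + (qD s t)^2 = 1 := by
  have h1 := Real.sin_sq_add_cos_sq (s*π/2)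
  have h2 := Real.sin_sq_add_cos_sq (2*π*t)
  unfold qA qB qC qD
  linear_combination (cos (s*π/2)^2 + sin (s*π/2)^2 + 1) * h1 +
    (cos (s*π/2)^2 * (cos (s*π/2)^2 + sin (s*π/2)^2)) * h2

lemma quatRot_zero_s (t : ℝ) :
    quatRot (qA 0 t) (qB 0 t) (qC 0 t) (qD 0 t) = rotMatrix (4 * π * t) := by
  have h2 := Real.sin_sq_add_cos_sq (2*π*t)
  have hc : Real.cos (4*π*t) = cos (2*π*t)^2 - sin (2*π*t)^2 := by
    rw [show (4:ℝ)*π*t = 2*(2*π*t) by ring, Real.cos_two_mul]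
    linear_combination h2
  have hs : Real.sin (4*π*t) = 2 * sin (2*π*t) * cos (2*π*t) := by
    rw [show (4:ℝ)*π*t = 2*(2*π*t) by ring, Real.sin_two_mul]
  ext i j
  fin_cases i <;> fin_cases j <;>
    simp [quatRot, rotMatrix, qA, qB, qC, qD, hc, hs, Matrix.vecHead, Matrix.vecTail] <;>
    first
      | ring
      | linear_combination h2
      | linear_combination -h2

lemma q_one_s (t : ℝ) : qA 1 t = 1 ∧ qB 1 t = 0 ∧ qC 1 t = 0 ∧ qD 1 t = 0 := by
  unfold qA qB qC qD
  rw [show (1:ℝ)*π/2 = π/2 by ring]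
  simp

lemma q_t_zero (s : ℝ) : qA s 0 = 1 ∧ qB s 0 = 0 ∧ qC s 0 = 0 ∧ qD s 0 = 0 := by
  unfold qA qB qC qD
  simp [Real.sin_sq_add_cos_sq]

lemma q_t_one (s : ℝ) : qA s 1 = 1 ∧ qB s 1 = 0 ∧ qC s 1 = 0 ∧ qD s 1 = 0 := by
  unfold qA qB qC qD
  simp [Real.sin_two_pi, Real.cos_two_pi]

/-- The contracting homotopy as a point of `SO(3)`. -/
noncomputable def contractPt (p : unitInterval × unitInterval) : SO3 :=
  ⟨quatRot (qA p.1 p.2) (qB p.1 p.2) (qC p.1 p.2) (qD p.1 p.2), quatRot_mem (q_norm _ _)⟩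

lemma contractPt_continuous : Continuous contractPt := by
  apply Continuous.subtype_mk
  apply continuous_matrix
  have hs : Continuous fun p : unitInterval × unitInterval => (p.1 : ℝ) :=
    continuous_subtype_val.comp continuous_fst
  have ht : Continuous fun p : unitInterval × unitInterval => (p.2 : ℝ) :=
    continuous_subtype_val.comp continuous_snd
  intro i j
  fin_cases i <;> fin_cases j <;>
    simp [quatRot, qA, qB, qC, qD] <;> fun_prop

/-- The double full-rotation loop in `SO(3)` is null-homotopic: it is path-homotopic
(rel endpoints) to the constant loop at the identity. -/

theorem doubleRotationLoop_nullhomotopic :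
    doubleRotationLoop.Homotopic (Path.refl (1 : SO3)) := by
  refine ⟨{ toFun := contractPt, continuous_toFun := contractPt_continuous,
            map_zero_left := ?_, map_one_left := ?_, prop' := ?_ }⟩
  · intro x
    apply Subtype.ext
    show (contractPt (0, x) : Matrix (Fin 3) (Fin 3) ℝ) = rotMatrix (4 * π * (x : ℝ))
    simp only [contractPt]
    rw [show ((0 : unitInterval) : ℝ) = 0 from rfl]
    exact quatRot_zero_s _
  · intro x
    apply Subtype.ext
    show (contractPt (1, x) : Matrix (Fin 3) (Fin 3) ℝ) = 1
    simp only [contractPt]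
    rw [show ((1 : unitInterval) : ℝ) = 1 from rfl]
    obtain ⟨h1, h2, h3, h4⟩ := q_one_s (x : ℝ)
    rw [h1, h2, h3, h4, quatRot_one]
  · intro t x hx
    have key : ∀ v : ℝ, v = 0 ∨ v = 1 → contractPt (t, x) = (1 : SO3) → True := fun _ _ _ => trivial
    have h10 : contractPt (t, (0 : unitInterval)) = (1 : SO3) := by
      apply Subtype.ext
      show (quatRot (qA t ((0:unitInterval):ℝ)) _ _ _ : Matrix (Fin 3) (Fin 3) ℝ) = 1
      rw [show ((0 : unitInterval) : ℝ) = 0 from rfl]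
      obtain ⟨h1, h2, h3, h4⟩ := q_t_zero (t : ℝ)
      rw [h1, h2, h3, h4, quatRot_one]
    have h11 : contractPt (t, (1 : unitInterval)) = (1 : SO3) := by
      apply Subtype.ext
      show (quatRot (qA t ((1:unitInterval):ℝ)) _ _ _ : Matrix (Fin 3) (Fin 3) ℝ) = 1
      rw [show ((1 : unitInterval) : ℝ) = 1 from rfl]
      obtain ⟨h1, h2, h3, h4⟩ := q_t_one (t : ℝ)
      rw [h1, h2, h3, h4, quatRot_one]
    cases hx with
    | inl h =>
      subst h
      show contractPt (t, 0) = doubleRotationLoop 0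
      rw [h10, doubleRotationLoop.source]
    | inr h =>
      rw [Set.mem_singleton_iff] at h
      subst h
      show contractPt (t, 1) = doubleRotationLoop 1
      rw [h11, doubleRotationLoop.target]
end

section
/- Let p : E → X be a covering map between topological spaces, let e : E, and let n ≥ 2 be a natural number. Then the map HomotopyGroup n E e → HomotopyGroup n X (p e) induced by postcomposition with p (i.e., the descent to homotopy classes of the map sending a based n-loop γ to p ∘ γ) is a bijection. -/
open Topology.Homotopy
open scoped unitInterval

section Lifting

variable {E X : Type*} [TopologicalSpace E] [TopologicalSpace X] {p : E → X}

/-- Local homotopy lifting: a lift exists over `I × V` for some neighborhood `V` of any point. -/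
theorem IsCoveringMap.exists_local_lift (hp : IsCoveringMap p)
    {Y : Type*} [TopologicalSpace Y] (f : C(I × Y, X)) (g₀ : Y → E)
    (hg₀ : Continuous g₀) (h₀ : ∀ y, p (g₀ y) = f (0, y)) (y₀ : Y) :
    ∃ V : Set Y, IsOpen V ∧ y₀ ∈ V ∧ ∃ g : I × Y → E,
      ContinuousOn g (Set.univ ×ˢ V) ∧ (∀ t : I, ∀ y ∈ V, p (g (t, y)) = f (t, y)) ∧
      (∀ y ∈ V, g (0, y) = g₀ y) := by
  -- tube neighborhoods with trivializations
  have key : ∀ s : I, ∃ (W : Set I) (V : Set Y) (Tr : Bundle.Trivialization (p ⁻¹' {f (s, y₀)}) p),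
      IsOpen W ∧ IsOpen V ∧ s ∈ W ∧ y₀ ∈ V ∧ W ×ˢ V ⊆ f ⁻¹' Tr.baseSet := by
    intro s
    have hne : Nonempty (p ⁻¹' {f (s, y₀)}) := by
      have hclosed : IsClosed (Set.range p) := by
        rw [← isOpen_compl_iff, isOpen_iff_forall_mem_open]
        intro x hx
        obtain ⟨-, U, hxU, hU, -, H, hH⟩ := hp x
        refine ⟨U, ?_, hU, hxU⟩
        rintro _ hu ⟨e', rfl⟩
        apply hx
        refine ⟨(H.symm (⟨x, hxU⟩, (H ⟨e', hu⟩).2) : E), ?_⟩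
        have := hH (H.symm (⟨x, hxU⟩, (H ⟨e', hu⟩).2))
        rw [H.apply_symm_apply] at this
        exact this.symm
      have hcl : IsClopen ((fun t : I => f (t, y₀)) ⁻¹' Set.range p) :=
        ⟨hclosed.preimage (by fun_prop), hp.isOpenMap.isOpen_range.preimage (by fun_prop)⟩
      have hall := hcl.eq_univ ⟨0, g₀ y₀, h₀ y₀⟩
      have hs : s ∈ (fun t : I => f (t, y₀)) ⁻¹' Set.range p := by rw [hall]; trivial
      obtain ⟨e', he'⟩ := hs
      exact ⟨⟨e', he'⟩⟩
    set Tr := (hp (f (s, y₀))).toTrivialization with hTr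
    have hopen : IsOpen (f ⁻¹' Tr.baseSet) := Tr.open_baseSet.preimage f.continuous
    have hmem : (s, y₀) ∈ f ⁻¹' Tr.baseSet := (hp (f (s, y₀))).mem_toTrivialization_baseSet
    obtain ⟨W, V, hW, hV, hsW, hyV, hsub⟩ := isOpen_prod_iff.mp hopen s y₀ hmem
    exact ⟨W, V, Tr, hW, hV, hsW, hyV, hsub⟩
  choose W Vs T hWo hVo hsW hyV hsub using key
  -- partition of `I` subordinate to the cover `W`
  obtain ⟨t, ht0, hmono, ⟨m, htop⟩, hstrip⟩ :=
    exists_monotone_Icc_subset_open_cover_unitInterval hWo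
      (fun s _ => Set.mem_iUnion.mpr ⟨s, hsW s⟩)
  choose idx hidx using hstrip
  set V : Set Y := ⋂ k ∈ Finset.range m, Vs (idx k) with hVdef
  have hVopen : IsOpen V := isOpen_biInter_finset fun k _ => hVo _
  have hy₀V : y₀ ∈ V := Set.mem_biInter fun k _ => hyV _
  have hVsub : ∀ k < m, V ⊆ Vs (idx k) := fun k hk =>
    Set.biInter_subset_of_mem (Finset.mem_range.mpr hk)
  -- the strips map into the base sets
  have strip_mem : ∀ k < m, ∀ z : I × Y, z.1 ∈ Set.Icc (t k) (t (k + 1)) → z.2 ∈ V →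
      f z ∈ (T (idx k)).baseSet := by
    intro k hk z hz1 hz2
    exact hsub (idx k) ⟨hidx k hz1, hVsub k hk hz2⟩
  -- recursive construction of the lift on `[0, t k] × V`
  have main : ∀ k : ℕ, ∃ g : I × Y → E,
      ContinuousOn g (Set.Icc 0 (t k) ×ˢ V) ∧
      (∀ z ∈ Set.Icc 0 (t k) ×ˢ V, p (g z) = f z) ∧
      (∀ y ∈ V, g (0, y) = g₀ y) := by
    intro k
    induction k with
    | zero =>
      refine ⟨fun z => g₀ z.2, (hg₀.comp continuous_snd).continuousOn, ?_, fun y _ => rfl⟩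
      rintro ⟨a, y⟩ ⟨ha, -⟩
      have : a = 0 := le_antisymm (ht0 ▸ ha.2) a.2.1
      rw [this, h₀]
    | succ k ih =>
      obtain ⟨g, hgc, hgp, hg0⟩ := ih
      rcases le_or_gt m k with hmk | hkm
      · -- degenerate strip : `t (k+1) = t k = 1`
        refine ⟨g, ?_, ?_, hg0⟩ <;> rw [htop (k+1) (le_trans hmk (Nat.le_succ k)), ← htop k hmk]
        exacts [hgc, hgp]
      · -- genuine strip
        set Tk := T (idx k) with hTk
        have hsrc : ∀ y ∈ V, g (t k, y) ∈ Tk.source := by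
          intro y hy
          rw [Tk.mem_source, hgp (t k, y) ⟨⟨(t k).2.1, le_refl _⟩, hy⟩]
          exact strip_mem k hkm (t k, y) ⟨le_refl _, hmono (Nat.le_succ k)⟩ hy
        set b2 : I × Y → E :=
          fun z => Tk.toOpenPartialHomeomorph.symm (f z, (Tk (g (t k, z.2))).2) with hb2
        have htgt : ∀ z : I × Y, z.1 ∈ Set.Icc (t k) (t (k+1)) → z.2 ∈ V →
            (f z, (Tk (g (t k, z.2))).2) ∈ Tk.target := by
          intro z h1 h2
          rw [Tk.mem_target]
          exact strip_mem k hkm z h1 h2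
        have hb2p : ∀ z : I × Y, z.1 ∈ Set.Icc (t k) (t (k+1)) → z.2 ∈ V →
            p (b2 z) = f z := fun z h1 h2 => Tk.proj_symm_apply (htgt z h1 h2)
        have hb2c : ContinuousOn b2 (Set.Icc (t k) (t (k+1)) ×ˢ V) := by
          have h1 : ContinuousOn (fun z : I × Y => g (t k, z.2))
              (Set.Icc (t k) (t (k+1)) ×ˢ V) := by
            apply hgc.comp (continuous_const.prodMk continuous_snd).continuousOn
            rintro ⟨a, y⟩ ⟨-, hy⟩
            exact ⟨⟨(t k).2.1, le_refl _⟩, hy⟩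
          have h2 : ContinuousOn (fun z : I × Y => (Tk (g (t k, z.2))).2)
              (Set.Icc (t k) (t (k+1)) ×ˢ V) := by
            apply ContinuousOn.snd
            apply Tk.toOpenPartialHomeomorph.continuousOn.comp h1
            rintro ⟨a, y⟩ ⟨-, hy⟩
            exact hsrc y hy
          have h3 : ContinuousOn (fun z : I × Y => (f z, (Tk (g (t k, z.2))).2))
              (Set.Icc (t k) (t (k+1)) ×ˢ V) := f.continuous.continuousOn.prodMk h2
          apply Tk.toOpenPartialHomeomorph.continuousOn_symm.comp h3
          rintro ⟨a, y⟩ ⟨ha, hy⟩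
          exact htgt (a, y) ha hy
        -- agreement on the overlap
        have hover : ∀ y ∈ V, b2 (t k, y) = g (t k, y) := by
          intro y hy
          have h1 : (f (t k, y), (Tk (g (t k, y))).2) = Tk (g (t k, y)) := by
            refine Prod.ext ?_ rfl
            rw [Tk.coe_fst (hsrc y hy), hgp (t k, y) ⟨⟨(t k).2.1, le_refl _⟩, hy⟩]
          rw [hb2]
          simp only
          rw [h1]
          exact Tk.toOpenPartialHomeomorph.left_inv (hsrc y hy)
        classical
        refine ⟨fun z => if z.1 ≤ t k then g z else b2 z, ?_, ?_, ?_⟩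
        · -- continuity via `ContinuousOn.if`
          have hclosed : IsClosed {z : I × Y | z.1 ≤ t k} := by
            have : {z : I × Y | z.1 ≤ t k} =
                (fun z : I × Y => (z.1 : ℝ)) ⁻¹' Set.Iic ((t k : ℝ)) := by
              ext z; simp [Subtype.coe_le_coe]
            rw [this]
            exact isClosed_Iic.preimage (continuous_subtype_val.comp continuous_fst)
          have hopen' : IsOpen {z : I × Y | (t k : I) < z.1} := by
            have : {z : I × Y | (t k : I) < z.1} =
                (fun z : I × Y => (z.1 : ℝ)) ⁻¹' Set.Ioi ((t k : ℝ)) := by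
              ext z; simp [← Subtype.coe_lt_coe]
            rw [this]
            exact isOpen_Ioi.preimage (continuous_subtype_val.comp continuous_fst)
          have hclosed2 : IsClosed {z : I × Y | t k ≤ z.1} := by
            have : {z : I × Y | t k ≤ z.1} =
                (fun z : I × Y => (z.1 : ℝ)) ⁻¹' Set.Ici ((t k : ℝ)) := by
              ext z; simp [Subtype.coe_le_coe]
            rw [this]
            exact isClosed_Ici.preimage (continuous_subtype_val.comp continuous_fst)
          have hopen2 : IsOpen {z : I × Y | z.1 < t k} := by
            have : {z : I × Y | z.1 < t k} =
                (fun z : I × Y => (z.1 : ℝ)) ⁻¹' Set.Iio ((t k : ℝ)) := by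
              ext z; simp [← Subtype.coe_lt_coe]
            rw [this]
            exact isOpen_Iio.preimage (continuous_subtype_val.comp continuous_fst)
          apply ContinuousOn.if
          · rintro ⟨a, y⟩ ⟨⟨ha, hy⟩, hfr⟩
            have h1 : a ≤ t k := by
              have := frontier_subset_closure hfr
              rwa [hclosed.closure_eq] at this
            have hsub' : {z : I × Y | z.1 < t k} ⊆ {z : I × Y | z.1 ≤ t k} :=
              fun z (hz : z.1 < t k) => (le_of_lt hz : z.1 ≤ t k)
            have h2 : ¬ a < t k := fun hlt =>
              hfr.2 (interior_maximal hsub' hopen2 hlt)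
            have h3 : a = t k := le_antisymm h1 (not_lt.mp h2)
            rw [h3]
            exact (hover y hy).symm
          · rw [hclosed.closure_eq]
            apply hgc.mono
            rintro ⟨a, y⟩ ⟨⟨-, hy⟩, h⟩
            exact ⟨⟨a.2.1, h⟩, hy⟩
          · apply hb2c.mono
            rintro ⟨a, y⟩ ⟨⟨ha, hy⟩, h⟩
            have hcl : closure {z : I × Y | ¬ z.1 ≤ t k} ⊆ {z : I × Y | t k ≤ z.1} :=
              closure_minimal (fun z hz => le_of_lt (not_le.mp hz)) hclosed2
            exact ⟨⟨hcl h, ha.2⟩, hy⟩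
        · rintro ⟨a, y⟩ ⟨ha, hy⟩
          by_cases h : a ≤ t k
          · simp only [if_pos h]
            exact hgp (a, y) ⟨⟨a.2.1, h⟩, hy⟩
          · simp only [if_neg h]
            exact hb2p (a, y) ⟨le_of_lt (not_le.mp h), ha.2⟩ hy
        · intro y hy
          have h0 : (0 : I) ≤ t k := (t k).2.1
          simp only [if_pos h0]
          exact hg0 y hy
  obtain ⟨g, hgc, hgp, hg0⟩ := main m
  refine ⟨V, hVopen, hy₀V, g, ?_, ?_, hg0⟩
  · have : Set.Icc (0 : I) (t m) = Set.univ := by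
      rw [htop m (le_refl m)]
      exact Set.eq_univ_of_forall fun a => ⟨a.2.1, a.2.2⟩
    rwa [this] at hgc
  · intro a y hy
    have : Set.Icc (0 : I) (t m) = Set.univ := by
      rw [htop m (le_refl m)]
      exact Set.eq_univ_of_forall fun a => ⟨a.2.1, a.2.2⟩
    exact hgp (a, y) (by rw [this]; exact ⟨Set.mem_univ _, hy⟩)

/-- Homotopy lifting property for covering maps. -/
theorem IsCoveringMap.exists_homotopy_lift (hp : IsCoveringMap p)
    {Y : Type*} [TopologicalSpace Y] (f : C(I × Y, X)) (g₀ : Y → E)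
    (hg₀ : Continuous g₀) (h₀ : ∀ y, p (g₀ y) = f (0, y)) :
    ∃ g : I × Y → E, Continuous g ∧ (∀ z, p (g z) = f z) ∧ ∀ y, g (0, y) = g₀ y := by
  choose V hVo hyV L hLc hLp hL0 using hp.exists_local_lift f g₀ hg₀ h₀
  have vertc : ∀ (a : Y) (y : Y), y ∈ V a → Continuous fun t : I => L a (t, y) := by
    intro a y hya
    apply (hLc a).comp_continuous (continuous_id.prodMk continuous_const)
    exact fun t => ⟨Set.mem_univ _, hya⟩
  have uniq : ∀ (a b y : Y), y ∈ V a → y ∈ V b → ∀ t : I, L a (t, y) = L b (t, y) := by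
    intro a b y hya hyb
    have key : (fun t : I => L a (t, y)) = fun t : I => L b (t, y) := by
      apply hp.eq_of_comp_eq (vertc a y hya) (vertc b y hyb)
      · funext t
        show p (L a (t, y)) = p (L b (t, y))
        rw [hLp a t y hya, hLp b t y hyb]
      · show L a (0, y) = L b (0, y)
        rw [hL0 a y hya, hL0 b y hyb]
    exact fun t => congrFun key t
  refine ⟨fun z => L z.2 z, ?_, fun z => hLp z.2 z.1 z.2 (hyV z.2),
    fun y => hL0 y y (hyV y)⟩
  rw [continuous_iff_continuousAt]
  rintro ⟨t₀, y₀⟩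
  have hopen : IsOpen ((Set.univ : Set I) ×ˢ V y₀) := isOpen_univ.prod (hVo y₀)
  have hmem : ((t₀, y₀) : I × Y) ∈ (Set.univ : Set I) ×ˢ V y₀ :=
    ⟨Set.mem_univ _, hyV y₀⟩
  have heq : Set.EqOn (L y₀) (fun z : I × Y => L z.2 z) ((Set.univ : Set I) ×ˢ V y₀) := by
    rintro ⟨t, y⟩ ⟨-, hy⟩
    exact (uniq y y₀ y (hyV y) hy t).symm
  exact ((hLc y₀).continuousAt (hopen.mem_nhds hmem)).congr
    (Filter.eventuallyEq_of_mem (hopen.mem_nhds hmem) heq)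

/-- Lifting maps from cubes, anchored at the `0` corner. -/
theorem IsCoveringMap.exists_cube_lift (hp : IsCoveringMap p) :
    ∀ (n : ℕ) (f : C((Fin n → I), X)) (e₀ : E), p e₀ = f (fun _ => 0) →
      ∃ g : C((Fin n → I), E), (∀ y, p (g y) = f y) ∧ g (fun _ => 0) = e₀ := by
  intro n
  induction n with
  | zero =>
    intro f e₀ he₀
    have hy : ∀ y : Fin 0 → I, y = fun _ => 0 := fun y => funext fun i => i.elim0
    exact ⟨ContinuousMap.const _ e₀, fun y => by rw [hy y]; exact he₀, rfl⟩
  | succ n ih =>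
    intro f e₀ he₀
    have hinvc : Continuous fun z : I × (Fin n → I) => (Fin.cons z.1 z.2 : Fin (n+1) → I) := by
      apply continuous_pi
      intro i
      induction i using Fin.cases with
      | zero => simpa only [Fin.cons_zero] using continuous_fst
      | succ j => simpa only [Fin.cons_succ, Function.comp_def] using (continuous_apply j).comp continuous_snd
    set toF : (Fin (n+1) → I) → I × (Fin n → I) := fun x => (x 0, fun j => x j.succ) with htoF
    have htoFc : Continuous toF :=
      (continuous_apply 0).prodMk (continuous_pi fun j => continuous_apply _)
    set f' : C(I × (Fin n → I), X) := f.comp ⟨fun z => Fin.cons z.1 z.2, hinvc⟩ with hf'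
    have hcons0 : (Fin.cons 0 (fun _ => (0:I)) : Fin (n+1) → I) = fun _ => 0 :=
      funext fun i => Fin.cases rfl (fun j => rfl) i
    have he₀' : p e₀ = f' (0, fun _ => 0) := by
      show p e₀ = f (Fin.cons 0 fun _ => (0:I))
      rw [hcons0]; exact he₀
    obtain ⟨g₀, hg₀p, hg₀0⟩ :=
      ih (f'.comp ⟨fun y => ((0:I), y), continuous_const.prodMk continuous_id⟩) e₀ he₀'
    obtain ⟨G, hGc, hGp, hG0⟩ :=
      hp.exists_homotopy_lift f' (fun y => g₀ y) g₀.continuous (fun y => hg₀p y)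
    have hsection : ∀ x : Fin (n+1) → I, (Fin.cons (x 0) (fun j => x j.succ)) = x :=
      fun x => funext fun i => Fin.cases rfl (fun j => rfl) i
    refine ⟨⟨fun x => G (toF x), hGc.comp htoFc⟩, ?_, ?_⟩
    · intro y
      show p (G (toF y)) = f y
      rw [hGp (toF y)]
      show f (Fin.cons (y 0) fun j => y j.succ) = f y
      rw [hsection y]
    · show G (toF fun _ => 0) = e₀
      have : toF (fun _ => 0) = ((0 : I), fun _ => (0:I)) := rfl
      rw [this, hG0, hg₀0]

end Lifting

section Boundary

theorem cube_face_preconnected {n : ℕ} (i : Fin n) (a : I) :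
    IsPreconnected {y : Fin n → I | y i = a} := by
  classical
  have himg : {y : Fin n → I | y i = a} =
      (fun y : Fin n → I => Function.update y i a) '' Set.univ := by
    ext y
    constructor
    · intro hy
      refine ⟨y, Set.mem_univ _, ?_⟩
      rw [← hy]
      exact Function.update_eq_self i y
    · rintro ⟨z, -, rfl⟩
      exact Function.update_self i a z
  have hcont : Continuous fun y : Fin n → I => Function.update y i a := by
    apply continuous_pi
    intro j
    by_cases h : j = i
    · simpa only [Function.update_apply, if_pos h] using continuous_const
    · simpa only [Function.update_apply, if_neg h] using continuous_apply j
  rw [himg]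
  exact isPreconnected_univ.image _ hcont.continuousOn

theorem cube_boundary_preconnected {n : ℕ} (hn : 2 ≤ n) :
    IsPreconnected (Cube.boundary (Fin n)) := by
  classical
  apply isPreconnected_of_forall (fun _ => (0 : I))
  rintro y ⟨i, hi⟩
  -- pick a coordinate different from i
  have i0 : Fin n := ⟨0, by omega⟩
  obtain ⟨k, hk⟩ : ∃ k : Fin n, k ≠ i := by
    rcases eq_or_ne (⟨0, by omega⟩ : Fin n) i with h | h
    · exact ⟨⟨1, by omega⟩, by rw [← h]; intro hc; exact absurd (Fin.val_eq_of_eq hc) (by simp)⟩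
    · exact ⟨⟨0, by omega⟩, h⟩
  obtain ⟨a, ha01, ha⟩ : ∃ a : I, (a = 0 ∨ a = 1) ∧ y i = a := by
    rcases hi with hi | hi
    exacts [⟨0, Or.inl rfl, hi⟩, ⟨1, Or.inr rfl, hi⟩]
  set z : Fin n → I := Function.update (fun _ => (0:I)) i a with hz
  have hz1 : z i = a := by simp [hz]
  have hz2 : z k = 0 := by simp [hz, Function.update_of_ne hk]
  refine ⟨{w : Fin n → I | w i = a} ∪ {w : Fin n → I | w k = 0}, ?_, ?_, Or.inl ha, ?_⟩
  · rintro w (hw | hw)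
    · refine ⟨i, ?_⟩
      rcases ha01 with h | h
      exacts [Or.inl (hw.trans h), Or.inr (hw.trans h)]
    · exact ⟨k, Or.inl hw⟩
  · exact Or.inr rfl
  · exact IsPreconnected.union z hz1 hz2 (cube_face_preconnected i a)
      (cube_face_preconnected k 0)

end Boundary


/-- A covering map induces a bijection on all homotopy groups `π_n` with `n ≥ 2`.
The induced map is the descent to homotopy classes of the map sending a based
`n`-loop `γ` to `p ∘ γ`. -/
theorem covering_map_bijective_on_higher_homotopy_groups
    {E X : Type*} [TopologicalSpace E] [TopologicalSpace X]
    (p : E → X) (hp : IsCoveringMap p) (e : E) (n : ℕ) (hn : 2 ≤ n) :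
    Function.Bijective
      (Quotient.map
        (fun γ : GenLoop (Fin n) E e =>
          (⟨(⟨p, hp.continuous⟩ : C(E, X)).comp γ.1, fun y hy => by
              simp only [ContinuousMap.comp_apply, ContinuousMap.coe_mk]
              rw [γ.2 y hy]⟩ : GenLoop (Fin n) X (p e)))
        (fun γ₁ γ₂ h => h.map fun H => H.compContinuousMap ⟨p, hp.continuous⟩) :
        HomotopyGroup (Fin n) E e → HomotopyGroup (Fin n) X (p e)) := by
  have h0bd : (fun _ => (0:I) : Fin n → I) ∈ Cube.boundary (Fin n) :=
    ⟨⟨0, by omega⟩, Or.inl rfl⟩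
  constructor
  · -- injectivity
    intro q₀ q₁
    refine Quotient.inductionOn₂ q₀ q₁ ?_
    intro Γ₀ Γ₁ h
    change Quotient.mk _ _ = Quotient.mk _ _ at h
    obtain ⟨H⟩ := Quotient.exact h
    obtain ⟨G, hGc, hGp, hG0⟩ := hp.exists_homotopy_lift H.toContinuousMap
      (fun y => Γ₀ y) Γ₀.1.continuous (fun y => (H.apply_zero y).symm)
    have hbd : ∀ y ∈ Cube.boundary (Fin n), ∀ t : I, G (t, y) = e := by
      intro y hy t
      have hcont : Continuous fun t : I => G (t, y) :=
        hGc.comp (continuous_id.prodMk continuous_const)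
      have hconst := hp.const_of_comp hcont (fun a a' => by
        show p (G (a, y)) = p (G (a', y))
        rw [hGp (a, y), hGp (a', y)]
        show H (a, y) = H (a', y)
        rw [H.eq_fst a hy, H.eq_fst a' hy]) t 0
      rw [hconst]
      show G (0, y) = e
      rw [hG0 y]
      exact Γ₀.2 y hy
    have hone : ∀ y, G (1, y) = Γ₁ y := by
      have h1 : Continuous fun y => G (1, y) :=
        hGc.comp (continuous_const.prodMk continuous_id)
      have key : (fun y => G (1, y)) = fun y => Γ₁ y := by
        apply hp.eq_of_comp_eq h1 Γ₁.1.continuous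
        · funext y
          show p (G (1, y)) = p (Γ₁ y)
          rw [hGp (1, y)]
          exact H.apply_one y
        · show G (1, fun _ => 0) = Γ₁ (fun _ => 0)
          rw [hbd _ h0bd 1]
          exact (Γ₁.2 _ h0bd).symm
      exact fun y => congrFun key y
    apply Quotient.sound
    exact ⟨⟨⟨⟨fun z => G z, hGc⟩, fun y => hG0 y, fun y => hone y⟩,
      fun t y hy => by
        show G (t, y) = Γ₀ y
        rw [hbd y hy t]; exact (Γ₀.2 y hy).symm⟩⟩
  · -- surjectivity
    intro q
    refine Quotient.inductionOn q ?_
    intro γ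
    have he : p e = γ.1 (fun _ => 0) := (γ.2 _ h0bd).symm
    obtain ⟨g, hgp, hg0⟩ := hp.exists_cube_lift n γ.1 e he
    have hbd : ∀ y ∈ Cube.boundary (Fin n), g y = e := by
      intro y hy
      have := hp.constOn_of_comp (cube_boundary_preconnected hn)
        g.continuous.continuousOn
        (fun a ha a' ha' => by rw [hgp a, hgp a', γ.2 a ha, γ.2 a' ha']) hy h0bd
      rw [this, hg0]
    refine ⟨⟦⟨g, hbd⟩⟧, ?_⟩
    show Quotient.mk _ _ = _
    congr 1
    exact Subtype.ext (ContinuousMap.ext fun y => hgp y)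
end

section
/- Let M be the mapping torus of the antipodal map of the 2-sphere. The map S² × ℝ → M sending (x, t) to [x, t] descends to a well-defined continuous map p : S² × AddCircle (2 : ℝ) → M (well-defined because [x, t+2] = [x, t] in M). The map p is a covering map, and every fiber of p has exactly two elements. In other words, S² × S¹ is a two-sheeted covering space of S²⨯S¹ (its orientation double cover). -/
/-- The unit 2-sphere in euclidean 3-space. -/
abbrev S2 : Type := Metric.sphere (0 : EuclideanSpace ℝ (Fin 3)) 1

/-- The relation generating the mapping torus of the antipodal map: `(x, t) ∼ (-x, t+1)`. -/
def mtRel : S2 × ℝ → S2 × ℝ → Prop := fun a b => b.1 = -a.1 ∧ b.2 = a.2 + 1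

/-- The mapping torus of the antipodal map of the 2-sphere (the twisted product `S²⨯S¹`),
i.e. the quotient of `S² × ℝ` by the equivalence relation generated by `(x,t) ∼ (-x,t+1)`,
with the quotient topology. -/
abbrev MT : Type := Quot mtRel

noncomputable section
namespace MTcover
open Set

/-- `n`-th power of the deck transformation `(x,t) ↦ (-x, t+1)`. -/
def tau (n : ℤ) (a : S2 × ℝ) : S2 × ℝ := (if Even n then a.1 else -a.1, a.2 + n)

lemma tau_zero (a : S2 × ℝ) : tau 0 a = a := by simp [tau]

lemma tau_tau (m n : ℤ) (a : S2 × ℝ) : tau m (tau n a) = tau (m + n) a := by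
  unfold tau
  refine Prod.ext ?_ (by push_cast; ring)
  rcases Int.even_or_odd m with hm | hm <;> rcases Int.even_or_odd n with hn | hn <;>
    simp_all [Int.even_add, Int.not_even_iff_odd, neg_neg, parity_simps]
  · simp [Int.not_even_iff_odd.mpr hm, Int.not_even_iff_odd.mpr hn, neg_neg,
      (Int.even_add.mpr (by simp [Int.not_even_iff_odd.mpr hm, Int.not_even_iff_odd.mpr hn] : Even m ↔ Even n) : Even (m+n))]

lemma rel_tau_succ (n : ℤ) (a : S2 × ℝ) : mtRel (tau n a) (tau (n + 1) a) := by
  constructor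
  · rcases Int.even_or_odd n with hn | hn <;>
      simp_all [tau, Int.even_add_one, Int.not_even_iff_odd, neg_neg]
    · simp [tau, Int.not_even_iff_odd.mpr hn, hn.add_one, neg_neg]
  · simp [tau]; push_cast; ring

lemma mk_tau (n : ℤ) (a : S2 × ℝ) : Quot.mk mtRel (tau n a) = Quot.mk mtRel a := by
  induction n using Int.induction_on with
  | zero => rw [tau_zero]
  | succ k ih => rw [← ih]; exact (Quot.sound (rel_tau_succ k a)).symm
  | pred k ih =>
    rw [← ih]
    have := Quot.sound (rel_tau_succ (-k - 1) a)
    simpa using this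

lemma eqvGen_exists {a b : S2 × ℝ} (h : Relation.EqvGen mtRel a b) : ∃ n : ℤ, b = tau n a := by
  induction h with
  | rel x y hxy => exact ⟨1, Prod.ext (by simp [tau, hxy.1]) (by simp [tau, hxy.2])⟩
  | refl x => exact ⟨0, (tau_zero x).symm⟩
  | symm x y _ ih =>
    obtain ⟨n, rfl⟩ := ih
    exact ⟨-n, by rw [tau_tau]; simp [tau_zero]⟩
  | trans x y z _ _ ih1 ih2 =>
    obtain ⟨n, rfl⟩ := ih1
    obtain ⟨m, rfl⟩ := ih2
    exact ⟨m + n, (tau_tau m n x)⟩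

lemma mk_eq_iff {a b : S2 × ℝ} : Quot.mk mtRel a = Quot.mk mtRel b ↔ ∃ n : ℤ, b = tau n a :=
  ⟨fun h => eqvGen_exists (Quot.eqvGen_exact h), fun ⟨n, h⟩ => h ▸ (mk_tau n a).symm⟩

lemma coe_eq_coe_iff {a b : ℝ} :
    (a : AddCircle (2:ℝ)) = (b : AddCircle (2:ℝ)) ↔ ∃ n : ℤ, b = a + 2 * n := by
  rw [QuotientAddGroup.eq_iff_sub_mem, AddSubgroup.mem_zmultiples_iff]
  constructor
  · rintro ⟨k, hk⟩
    exact ⟨-k, by rw [zsmul_eq_mul] at hk; push_cast; linarith⟩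
  · rintro ⟨n, rfl⟩
    exact ⟨-n, by rw [zsmul_eq_mul]; push_cast; ring⟩

/-- The covering map `S² × ℝ/2ℤ → MT`. -/
def pmap : S2 × AddCircle (2:ℝ) → MT := fun e =>
  Quotient.liftOn' e.2 (fun t => Quot.mk mtRel (e.1, t)) (by
    intro t t' h
    rw [QuotientAddGroup.leftRel_apply, AddSubgroup.mem_zmultiples_iff] at h
    obtain ⟨k, hk⟩ := h
    rw [zsmul_eq_mul] at hk
    have h2 : (e.1, t') = tau (2 * k) (e.1, t) := by
      refine Prod.ext (by simp [tau, even_two_mul]) ?_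
      simp only [tau]; push_cast; linarith
    show Quot.mk mtRel (e.1, t) = Quot.mk mtRel (e.1, t')
    rw [h2, mk_tau])

lemma pmap_mk (x : S2) (t : ℝ) : pmap (x, (t : AddCircle (2:ℝ))) = Quot.mk mtRel (x, t) := rfl

lemma continuous_pmap : Continuous pmap := by
  have hq : IsOpenQuotientMap (fun q : S2 × ℝ => (q.1, (q.2 : AddCircle (2:ℝ)))) :=
    IsOpenQuotientMap.id.prodMap QuotientAddGroup.isOpenQuotientMap_mk
  rw [hq.isQuotientMap.continuous_iff]
  exact continuous_quot_mk

lemma coe_int_eq_zero {n : ℤ} (hn : Even n) : ((n : ℝ) : AddCircle (2:ℝ)) = 0 := by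
  obtain ⟨k, rfl⟩ := hn
  rw [AddCircle.coe_eq_zero_iff]
  exact ⟨k, by push_cast [zsmul_eq_mul]; ring⟩

lemma fiber_eq (x0 : S2) (t0 : ℝ) :
    pmap ⁻¹' {Quot.mk mtRel (x0, t0)} =
      {(x0, (t0 : AddCircle (2:ℝ))), (-x0, ((t0 + 1 : ℝ) : AddCircle (2:ℝ)))} := by
  ext ⟨x, s⟩
  induction s using Quotient.inductionOn' with
  | h t =>
    have hcoe : (Quotient.mk'' t : AddCircle (2:ℝ)) = (t : AddCircle (2:ℝ)) := rfl
    rw [Set.mem_preimage, hcoe, Set.mem_singleton_iff, pmap_mk, Eq.comm, mk_eq_iff]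
    constructor
    · rintro ⟨n, hn⟩
      have hx : x = (if Even n then x0 else -x0) := congrArg Prod.fst hn
      have ht : t = t0 + n := congrArg Prod.snd hn
      rcases Int.even_or_odd n with hev | hod
      · left
        refine Prod.ext (by simp [hx, hev]) ?_
        show (t : AddCircle (2:ℝ)) = _
        rw [ht, AddCircle.coe_add, coe_int_eq_zero hev, add_zero]
      · right
        refine Prod.ext (by simp [hx, Int.not_even_iff_odd.mpr hod]) ?_
        show (t : AddCircle (2:ℝ)) = _
        have : t = (t0 + 1) + ((n - 1 : ℤ) : ℝ) := by rw [ht]; push_cast; ring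
        rw [this, AddCircle.coe_add, coe_int_eq_zero (by simpa using hod.sub_odd odd_one), add_zero]
    · rw [Set.mem_insert_iff, Set.mem_singleton_iff, Prod.ext_iff, Prod.ext_iff]
      rintro (⟨h1, h2⟩ | ⟨h1, h2⟩)
      · obtain ⟨k, hk⟩ := coe_eq_coe_iff.mp h2.symm
        refine ⟨2 * k, Prod.ext (by simp [tau, even_two_mul]; exact h1) ?_⟩
        show t = t0 + ((2 * k : ℤ) : ℝ)
        push_cast; linarith
      · obtain ⟨k, hk⟩ := coe_eq_coe_iff.mp h2.symm
        refine ⟨2 * k + 1, Prod.ext ?_ ?_⟩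
        · have : ¬ Even (2 * k + 1) := by simp [Int.even_add_one, even_two_mul]
          simp only [tau, if_neg this]
          exact h1
        · show t = t0 + ((2 * k + 1 : ℤ) : ℝ)
          push_cast; linarith
variable (s0 : ℝ)

/-! ### round lemmas -/

lemma round_eq_n {t : ℝ} {n : ℤ} (h : t ∈ Ioo (s0 + n - 1/2) (s0 + n + 1/2)) :
    round (t - s0) = n := by
  rw [round_eq, Int.floor_eq_iff]
  constructor
  · push_cast; linarith [h.1]
  · push_cast; linarith [h.2]

/-! ### the section -/

def sectFun (a : S2 × ℝ) : S2 × AddCircle (2:ℝ) :=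
  (if Even (round (a.2 - s0)) then a.1 else -a.1, ((a.2 - round (a.2 - s0) : ℝ) : AddCircle (2:ℝ)))

lemma sectFun_resp {a b : S2 × ℝ} (h : mtRel a b) : sectFun s0 a = sectFun s0 b := by
  obtain ⟨h1, h2⟩ := h
  have hr : round (b.2 - s0) = round (a.2 - s0) + 1 := by
    rw [h2, show a.2 + 1 - s0 = (a.2 - s0) + 1 by ring, round_add_one]
  have hr' : round (a.2 + 1 - s0) = round (a.2 - s0) + 1 := by
    rw [show a.2 + 1 - s0 = (a.2 - s0) + 1 by ring, round_add_one]
  refine Prod.ext ?_ ?_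
  · rw [show (sectFun s0 b).1 = if Even (round (b.2 - s0)) then b.1 else -b.1 from rfl,
      show (sectFun s0 a).1 = if Even (round (a.2 - s0)) then a.1 else -a.1 from rfl, h1, hr]
    rcases Int.even_or_odd (round (a.2 - s0)) with he | ho
    · simp [he, Int.even_add_one, Int.not_even_iff_odd, he.add_one]
    · simp [Int.not_even_iff_odd.mpr ho, ho.add_one, neg_neg]
  · show ((a.2 - round (a.2 - s0) : ℝ) : AddCircle (2:ℝ)) = ((b.2 - round (b.2 - s0) : ℝ) : _)
    rw [h2, hr']
    congr 1
    push_cast; ring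

def sect : MT → S2 × AddCircle (2:ℝ) := Quot.lift (sectFun s0) (fun _ _ h => sectFun_resp s0 h)

lemma sect_mk (a : S2 × ℝ) : sect s0 (Quot.mk mtRel a) = sectFun s0 a := rfl

lemma pmap_sect (m : MT) : pmap (sect s0 m) = m := by
  induction m using Quot.ind with
  | _ a =>
    rw [sect_mk]
    show pmap (_, ((a.2 - round (a.2 - s0) : ℝ) : AddCircle (2:ℝ))) = _
    rw [pmap_mk]
    have : (((if Even (round (a.2 - s0)) then a.1 else -a.1) : S2), a.2 - (round (a.2 - s0) : ℝ))
        = tau (-(round (a.2 - s0))) a := by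
      refine Prod.ext ?_ ?_
      · show _ = if Even (-(round (a.2 - s0))) then a.1 else -a.1
        simp only [even_neg]
      · show _ = a.2 + ((-(round (a.2 - s0)) : ℤ) : ℝ)
        push_cast; ring
    rw [this, mk_tau]

lemma sect_mk_of_mem {x : S2} {t : ℝ} (h : t ∈ Ioo (s0 - 1/2) (s0 + 1/2)) :
    sect s0 (Quot.mk mtRel (x, t)) = (x, (t : AddCircle (2:ℝ))) := by
  have h0 : round (t - s0) = 0 := round_eq_n s0 (by simpa using h)
  rw [sect_mk]
  unfold sectFun
  simp [h0]

/-! ### the bit function -/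

def bitf (s : AddCircle (2:ℝ)) : Bool :=
  Quotient.liftOn' s (fun t => decide (Even (round (t - s0)))) (by
    intro a b h
    rw [QuotientAddGroup.leftRel_apply, AddSubgroup.mem_zmultiples_iff] at h
    obtain ⟨k, hk⟩ := h
    rw [zsmul_eq_mul] at hk
    have hb : b = a + ((2 * k : ℤ) : ℝ) := by push_cast; linarith
    simp only [hb, show a + ((2 * k : ℤ) : ℝ) - s0 = (a - s0) + ((2 * k : ℤ) : ℝ) by ring,
      round_add_intCast]
    simp [Int.even_add, even_two_mul])

lemma bitf_coe (t : ℝ) : bitf s0 (t : AddCircle (2:ℝ)) = decide (Even (round (t - s0))) := rfl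

/-! ### the flip -/

def sig (e : S2 × AddCircle (2:ℝ)) : S2 × AddCircle (2:ℝ) :=
  (-e.1, e.2 + ((1:ℝ) : AddCircle (2:ℝ)))

lemma continuous_sig : Continuous sig :=
  (continuous_fst.neg).prodMk (continuous_snd.add continuous_const)

lemma sig_coe (x : S2) (t : ℝ) :
    sig (x, (t : AddCircle (2:ℝ))) = (-x, ((t + 1 : ℝ) : AddCircle (2:ℝ))) := by
  unfold sig
  rw [← AddCircle.coe_add]

lemma pmap_sig (e : S2 × AddCircle (2:ℝ)) : pmap (sig e) = pmap e := by
  obtain ⟨x, s⟩ := e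
  induction s using Quotient.inductionOn' with
  | h t =>
    have hcoe : (Quotient.mk'' t : AddCircle (2:ℝ)) = (t : AddCircle (2:ℝ)) := rfl
    rw [hcoe, sig_coe, pmap_mk, pmap_mk]
    exact (Quot.sound ⟨rfl, rfl⟩).symm

/-! ### base set -/

def J : Set ℝ := ⋃ n : ℤ, Ioo (s0 + n - 1/2) (s0 + n + 1/2)

def B : Set MT := Quot.mk mtRel '' (univ ×ˢ Ioo (s0 - 1/2) (s0 + 1/2))

lemma preimage_mk_B : Quot.mk mtRel ⁻¹' (B s0) = univ ×ˢ J s0 := by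
  ext a
  simp only [B, mem_preimage, mem_image, mem_prod, mem_univ, true_and, J, mem_iUnion]
  constructor
  · rintro ⟨b, hb, hba⟩
    obtain ⟨n, rfl⟩ := mk_eq_iff.mp hba
    refine ⟨n, ?_, ?_⟩
    · show s0 + n - 1/2 < b.2 + n; linarith [hb.1]
    · show b.2 + (n:ℝ) < s0 + n + 1/2; linarith [hb.2]
  · rintro ⟨n, hn1, hn2⟩
    refine ⟨tau (-n) a, ⟨?_, ?_⟩, ?_⟩
    · show s0 - 1/2 < a.2 + ((-n : ℤ) : ℝ); push_cast; linarith
    · show a.2 + ((-n : ℤ) : ℝ) < s0 + 1/2; push_cast; linarith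
    · rw [mk_tau]

lemma isOpen_B : IsOpen (B s0) := by
  rw [← (isQuotientMap_quot_mk (r := mtRel)).isOpen_preimage, preimage_mk_B]
  exact isOpen_univ.prod (isOpen_iUnion fun n => isOpen_Ioo)

lemma mk_mem_B {x : S2} {t : ℝ} (h : t ∈ Ioo (s0 - 1/2) (s0 + 1/2)) :
    Quot.mk mtRel (x, t) ∈ B s0 := ⟨(x, t), ⟨trivial, h⟩, rfl⟩

lemma mem_B_iff {m : MT} : m ∈ B s0 ↔
    ∃ (x : S2) (t : ℝ), t ∈ Ioo (s0 - 1/2) (s0 + 1/2) ∧ m = Quot.mk mtRel (x, t) := by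
  constructor
  · rintro ⟨⟨x, t⟩, ⟨-, ht⟩, rfl⟩
    exact ⟨x, t, ht, rfl⟩
  · rintro ⟨x, t, ht, rfl⟩
    exact mk_mem_B s0 ht

/-- normal form of points in the source -/
lemma mem_source_rep {e : S2 × AddCircle (2:ℝ)} (he : pmap e ∈ B s0) :
    ∃ (x' : S2) (t' : ℝ) (n : ℤ), t' ∈ Ioo (s0 - 1/2) (s0 + 1/2) ∧
      e = ((if Even n then x' else -x' : S2), ((t' + n : ℝ) : AddCircle (2:ℝ))) := by
  obtain ⟨x, s⟩ := e
  induction s using Quotient.inductionOn' with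
  | h t =>
    have hcoe : (Quotient.mk'' t : AddCircle (2:ℝ)) = (t : AddCircle (2:ℝ)) := rfl
    rw [hcoe, pmap_mk, mem_B_iff] at he
    obtain ⟨x1, t1, ht1, heq⟩ := he
    obtain ⟨n, hn⟩ := mk_eq_iff.mp heq
    have hxt : (x, t) = tau (-n) (x1, t1) := by
      rw [hn, tau_tau, neg_add_cancel, tau_zero]
    have h1 : x = (if Even (-n) then x1 else -x1) := congrArg Prod.fst hxt
    have h2 : t = t1 + ((-n : ℤ) : ℝ) := congrArg Prod.snd hxt
    refine ⟨x1, t1, -n, ht1, ?_⟩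
    rw [hcoe, Prod.ext_iff]
    exact ⟨h1, by rw [h2]⟩

/-! ### computations at normal-form points -/

lemma pmap_nf (x' : S2) (t' : ℝ) (n : ℤ) :
    pmap ((if Even n then x' else -x' : S2), ((t' + n : ℝ) : AddCircle (2:ℝ)))
      = Quot.mk mtRel (x', t') := by
  rw [pmap_mk]
  exact mk_tau n (x', t')

lemma mem_Ioo_n {t' : ℝ} (ht : t' ∈ Ioo (s0 - 1/2) (s0 + 1/2)) (n : ℤ) :
    t' + n ∈ Ioo (s0 + n - 1/2) (s0 + n + 1/2) := by
  constructor
  · linarith [ht.1]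
  · linarith [ht.2]

lemma bitf_nf {t' : ℝ} (ht : t' ∈ Ioo (s0 - 1/2) (s0 + 1/2)) (n : ℤ) :
    bitf s0 ((t' + n : ℝ) : AddCircle (2:ℝ)) = decide (Even n) := by
  rw [bitf_coe, round_eq_n s0 (mem_Ioo_n s0 ht n)]

lemma bitf_mk0 {t' : ℝ} (ht : t' ∈ Ioo (s0 - 1/2) (s0 + 1/2)) :
    bitf s0 ((t' : ℝ) : AddCircle (2:ℝ)) = true := by
  have h0 : round (t' - s0) = 0 := round_eq_n s0 (by simpa using ht)
  rw [bitf_coe, h0]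
  simp

/-- the inverse of the trivialization -/
def trivInv (q : MT × Bool) : S2 × AddCircle (2:ℝ) :=
  if q.2 then sect s0 q.1 else sig (sect s0 q.1)

lemma key_left {x' : S2} {t' : ℝ} (ht : t' ∈ Ioo (s0 - 1/2) (s0 + 1/2)) (n : ℤ) :
    trivInv s0 (Quot.mk mtRel (x', t'), decide (Even n))
      = ((if Even n then x' else -x' : S2), ((t' + n : ℝ) : AddCircle (2:ℝ))) := by
  rcases Int.even_or_odd n with he | ho
  · have hd : decide (Even n) = true := by simpa using he
    rw [hd]
    show sect s0 (Quot.mk mtRel (x', t')) = _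
    rw [sect_mk_of_mem s0 ht, if_pos he]
    refine Prod.ext rfl ?_
    show (t' : AddCircle (2:ℝ)) = ((t' + n : ℝ) : AddCircle (2:ℝ))
    obtain ⟨r, rfl⟩ := he
    exact coe_eq_coe_iff.mpr ⟨r, by push_cast; ring⟩
  · have hd : decide (Even n) = false := by simp [Int.not_even_iff_odd.mpr ho]
    rw [hd]
    show sig (sect s0 (Quot.mk mtRel (x', t'))) = _
    rw [sect_mk_of_mem s0 ht, sig_coe, if_neg (Int.not_even_iff_odd.mpr ho)]
    refine Prod.ext rfl ?_
    show ((t' + 1 : ℝ) : AddCircle (2:ℝ)) = ((t' + n : ℝ) : AddCircle (2:ℝ))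
    obtain ⟨r, rfl⟩ := ho
    exact coe_eq_coe_iff.mpr ⟨r, by push_cast; ring⟩

/-! ### continuity -/

lemma continuousOn_sectFun : ContinuousOn (sectFun s0) (univ ×ˢ J s0) := by
  rintro a ⟨-, ha2⟩
  obtain ⟨n, hn⟩ := mem_iUnion.mp ha2
  refine ContinuousAt.continuousWithinAt ?_
  have hg : Continuous (fun b : S2 × ℝ =>
      ((if Even n then b.1 else -b.1 : S2), ((b.2 - n : ℝ) : AddCircle (2:ℝ)))) := by
    refine Continuous.prodMk ?_
      ((AddCircle.continuous_mk' _).comp (continuous_snd.sub continuous_const))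
    split_ifs
    exacts [continuous_fst, continuous_fst.neg]
  refine hg.continuousAt.congr ?_
  have hU : (univ ×ˢ Ioo (s0 + n - 1/2) (s0 + n + 1/2) : Set (S2 × ℝ)) ∈ nhds a :=
    (isOpen_univ.prod isOpen_Ioo).mem_nhds ⟨trivial, hn⟩
  filter_upwards [hU] with b hb
  unfold sectFun
  rw [round_eq_n s0 hb.2]

lemma continuousOn_sect : ContinuousOn (sect s0) (B s0) := by
  rw [continuousOn_iff']
  intro w hw
  refine ⟨sect s0 ⁻¹' w ∩ B s0, ?_, by rw [inter_assoc, inter_self]⟩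
  rw [← (isQuotientMap_quot_mk (r := mtRel)).isOpen_preimage]
  have heq : Quot.mk mtRel ⁻¹' (sect s0 ⁻¹' w ∩ B s0)
      = (univ ×ˢ J s0) ∩ sectFun s0 ⁻¹' w := by
    rw [preimage_inter, preimage_mk_B]
    exact inter_comm _ _
  rw [heq]
  exact (continuousOn_sectFun s0).isOpen_inter_preimage
    (isOpen_univ.prod (isOpen_iUnion fun _ => isOpen_Ioo)) hw

lemma continuousOn_bitf_snd :
    ContinuousOn (fun e : S2 × AddCircle (2:ℝ) => bitf s0 e.2) (pmap ⁻¹' B s0) := by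
  intro e he
  obtain ⟨x', t', n, ht', rfl⟩ := mem_source_rep s0 he
  refine ContinuousAt.continuousWithinAt ?_
  have hV : (univ ×ˢ ((fun t : ℝ => (t : AddCircle (2:ℝ))) ''
      Ioo (s0 + n - 1/2) (s0 + n + 1/2)) : Set (S2 × AddCircle (2:ℝ))) ∈
      nhds ((if Even n then x' else -x' : S2), ((t' + n : ℝ) : AddCircle (2:ℝ))) := by
    refine (isOpen_univ.prod
      (QuotientAddGroup.isOpenQuotientMap_mk.isOpenMap _ isOpen_Ioo)).mem_nhds
      ⟨trivial, ⟨t' + n, mem_Ioo_n s0 ht' n, rfl⟩⟩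
  refine continuousAt_const (y := decide (Even n)) |>.congr ?_
  filter_upwards [hV] with b hb
  obtain ⟨t'', ht'', hc⟩ := hb.2
  show decide (Even n) = bitf s0 b.2
  rw [← hc, bitf_coe, round_eq_n s0 ht'']

/-! ### the trivialization -/

def triv : Bundle.Trivialization Bool pmap where
  toFun e := (pmap e, bitf s0 e.2)
  invFun := trivInv s0
  source := pmap ⁻¹' B s0
  target := B s0 ×ˢ univ
  map_source' e he := ⟨he, trivial⟩
  map_target' q hq := by
    show pmap (trivInv s0 q) ∈ B s0
    unfold trivInv
    split_ifs
    · rw [pmap_sect]; exact hq.1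
    · rw [pmap_sig, pmap_sect]; exact hq.1
  left_inv' e he := by
    obtain ⟨x', t', n, ht', rfl⟩ := mem_source_rep s0 he
    show trivInv s0 (pmap ((if Even n then x' else -x' : S2), ((t' + n : ℝ) : AddCircle (2:ℝ))),
      bitf s0 ((t' + n : ℝ) : AddCircle (2:ℝ))) = _
    rw [pmap_nf, bitf_nf s0 ht' n]
    exact key_left s0 ht' n
  right_inv' q hq := by
    obtain ⟨m, b⟩ := q
    obtain ⟨x, t, ht, rfl⟩ := (mem_B_iff s0).mp hq.1
    cases b
    · have h1 : trivInv s0 (Quot.mk mtRel (x, t), false) = sig (x, (t : AddCircle (2:ℝ))) := by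
        unfold trivInv
        rw [if_neg (by simp), sect_mk_of_mem s0 ht]
      show (pmap (trivInv s0 _), bitf s0 (trivInv s0 _).2) = _
      rw [h1, sig_coe]
      have hpn := pmap_nf x t 1
      have hbn := bitf_nf s0 ht 1
      push_cast at hpn hbn
      rw [if_neg (by simp)] at hpn
      refine Prod.ext ?_ ?_
      · show pmap (-x, ((t + 1 : ℝ) : AddCircle (2:ℝ))) = _
        exact hpn
      · show bitf s0 ((t + 1 : ℝ) : AddCircle (2:ℝ)) = _
        rw [hbn]
        simp
    · have h1 : trivInv s0 (Quot.mk mtRel (x, t), true) = (x, (t : AddCircle (2:ℝ))) := by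
        unfold trivInv
        rw [if_pos (by simp), sect_mk_of_mem s0 ht]
      show (pmap (trivInv s0 _), bitf s0 (trivInv s0 _).2) = _
      rw [h1]
      refine Prod.ext ?_ ?_
      · show pmap (x, (t : AddCircle (2:ℝ))) = _
        rw [pmap_mk]
      · show bitf s0 ((t : ℝ) : AddCircle (2:ℝ)) = _
        rw [bitf_mk0 s0 ht]
  open_source := (isOpen_B s0).preimage continuous_pmap
  open_target := (isOpen_B s0).prod isOpen_univ
  continuousOn_toFun := continuous_pmap.continuousOn.prodMk (continuousOn_bitf_snd s0)
  continuousOn_invFun := by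
    rintro ⟨m, b⟩ ⟨hm, -⟩
    refine ContinuousAt.continuousWithinAt ?_
    have hsect : ContinuousAt (sect s0) m :=
      (continuousOn_sect s0).continuousAt ((isOpen_B s0).mem_nhds hm)
    have hfst : ContinuousAt (fun q : MT × Bool => sect s0 q.1) (m, b) :=
      hsect.comp continuousAt_fst
    have hW : (univ ×ˢ {b} : Set (MT × Bool)) ∈ nhds (m, b) :=
      (isOpen_univ.prod (isOpen_discrete _)).mem_nhds ⟨trivial, rfl⟩
    cases b
    · refine (continuous_sig.continuousAt.comp hfst).congr ?_
      filter_upwards [hW] with q hq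
      have : q.2 = false := hq.2
      show sig (sect s0 q.1) = trivInv s0 q
      unfold trivInv
      rw [this, if_neg (by simp)]
    · refine hfst.congr ?_
      filter_upwards [hW] with q hq
      have : q.2 = true := hq.2
      show sect s0 q.1 = trivInv s0 q
      unfold trivInv
      rw [this, if_pos (by simp)]
  baseSet := B s0
  open_baseSet := isOpen_B s0
  source_eq := rfl
  target_eq := rfl
  proj_toFun e he := rfl

lemma isCoveringMap_pmap : IsCoveringMap pmap := by
  refine IsCoveringMap.mk pmap (fun _ => Bool)
    (fun m => triv (Quot.exists_rep m).choose.2) (fun m => ?_)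
  have ha : Quot.mk mtRel (Quot.exists_rep m).choose = m := (Quot.exists_rep m).choose_spec
  have key : ∀ a : S2 × ℝ, Quot.mk mtRel a ∈ B a.2 :=
    fun a => mk_mem_B _ ⟨by linarith, by linarith⟩
  have := key (Quot.exists_rep m).choose
  rw [ha] at this
  exact this
end MTcover
end

open MTcover in
/-- The map `S² × ℝ → S²⨯S¹`, `(x,t) ↦ [x,t]`, descends to a well-defined continuous map
`p : S² × ℝ/2ℤ → S²⨯S¹` (since `[x, t+2] = [x, t]`), which is a two-sheeted covering map:
`S² × S¹` is the orientation double cover of `S²⨯S¹`. -/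
theorem orientation_double_cover_of_mappingTorus_antipodal :
    ∃ p : S2 × AddCircle (2 : ℝ) → MT,
      (∀ (x : S2) (t : ℝ), p (x, (t : AddCircle (2 : ℝ))) = Quot.mk mtRel (x, t)) ∧
      Continuous p ∧ IsCoveringMap p ∧ ∀ m : MT, Nat.card (p ⁻¹' {m}) = 2 := by
  refine ⟨pmap, pmap_mk, continuous_pmap, isCoveringMap_pmap, ?_⟩
  intro m
  obtain ⟨⟨x0, t0⟩, rfl⟩ := Quot.exists_rep m
  rw [fiber_eq, Nat.card_coe_set_eq, Set.ncard_pair]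
  intro h
  have h2 : ((t0 : ℝ) : AddCircle (2:ℝ)) = ((t0 + 1 : ℝ) : AddCircle (2:ℝ)) :=
    congrArg Prod.snd h
  obtain ⟨k, hk⟩ := coe_eq_coe_iff.mp h2
  have hk2 : (1 : ℤ) = 2 * k := by exact_mod_cast (by linarith : (1:ℝ) = 2 * k)
  omega
end

section
/- Let M be the mapping torus of the antipodal map of the 2-sphere and x₀ = [x, 0] for some x ∈ S². The map F : [0,1] × M → M defined by F(s, [y, t]) = [y, t + 2s] is well-defined and continuous, satisfies F(0, ·) = F(1, ·) = id_M (so F is a homotopy from the identity of M to itself), and the trace loop s ↦ F(s, x₀) = [x, 2s] is a loop at x₀ that is not null-homotopic (not path-homotopic rel endpoints to the constant loop at x₀). -/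
noncomputable section MTAuxSection

open Set unitInterval

namespace MTAux

/-- The representative of a point of `ℝ/ℤ` in `[-1/2, 1/2)`. -/
def rho (z : AddCircle (1 : ℝ)) : ℝ := (AddCircle.equivIco 1 (-(1/2)) z : ℝ)

lemma coe_rho (z : AddCircle (1 : ℝ)) : ((rho z : ℝ) : AddCircle (1:ℝ)) = z :=
  (AddCircle.equivIco 1 (-(1/2))).symm_apply_apply z

lemma rho_coe {x : ℝ} (hx : x ∈ Ico (-(1/2) : ℝ) (1/2)) : rho (x : AddCircle (1:ℝ)) = x := by
  have hx' : x ∈ Ico (-(1/2) : ℝ) (-(1/2) + 1) := by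
    constructor
    · exact hx.1
    · linarith [hx.2]
  have := AddCircle.liftIco_coe_apply (f := (id : ℝ → ℝ)) hx'
  simpa [AddCircle.liftIco, rho] using this

lemma rho_zero : rho 0 = 0 := by
  have : ((0 : ℝ) : AddCircle (1:ℝ)) = 0 := by norm_num
  rw [← this, rho_coe (by norm_num)]

lemma norm_half : ‖((-(1/2) : ℝ) : AddCircle (1:ℝ))‖ = 1/2 := by
  rw [AddCircle.norm_eq]
  have : round ((1:ℝ)⁻¹ * (-(1/2))) = 0 := by
    rw [round_eq]
    norm_num
  rw [this]
  norm_num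

lemma continuousAt_rho {z : AddCircle (1:ℝ)} (hz : ‖z‖ < 1/2) : ContinuousAt rho z := by
  have hne : z ≠ (((-(1/2) : ℝ)) : AddCircle (1:ℝ)) := by
    intro h
    rw [h, norm_half] at hz
    linarith
  exact continuousAt_subtype_val.comp (AddCircle.continuousAt_equivIco 1 (-(1/2)) hne)

/-- A continuous integer-valued function on `I` takes the same value at `1` and `0`. -/
lemma eq_of_int_valued {f : I → ℝ} (hf : Continuous f)
    (h : ∀ t, ((f t : ℝ) : AddCircle (1:ℝ)) = 0) : f 1 = f 0 := by
  have hint : ∀ t, ∃ n : ℤ, f t = (n : ℝ) := by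
    intro t
    obtain ⟨n, hn⟩ := (AddCircle.coe_eq_zero_iff (1:ℝ)).1 (h t)
    exact ⟨n, by simpa [zsmul_eq_mul] using hn.symm⟩
  by_contra hne
  obtain ⟨n0, hn0⟩ := hint 0
  obtain ⟨n1, hn1⟩ := hint 1
  have key : ∀ (a b : I) (m : ℤ), f a = m → (f a < f b) → ∃ t, f t = (m : ℝ) + 1/2 := by
    intro a b m hm hab
    have hmem : (m : ℝ) + 1/2 ∈ Icc (f a) (f b) := by
      obtain ⟨k, hk⟩ := hint b
      have : m < k := by
        rw [hm, hk] at hab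
        exact_mod_cast hab
      constructor
      · rw [hm]; linarith
      · rw [hk]
        have : (m : ℝ) + 1 ≤ k := by exact_mod_cast this
        linarith
    obtain ⟨t, ht⟩ := intermediate_value_univ a b hf hmem
    exact ⟨t, ht⟩
  have nohalf : ∀ (t : I) (m : ℤ), f t ≠ (m : ℝ) + 1/2 := by
    intro t m heq
    obtain ⟨k, hk⟩ := hint t
    rw [hk] at heq
    have : (2 * k : ℝ) = 2 * m + 1 := by linarith
    have : (2 * k : ℤ) = 2 * m + 1 := by exact_mod_cast this
    omega
  rcases lt_or_gt_of_ne hne with hlt | hlt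
  · obtain ⟨t, ht⟩ := key 1 0 n1 hn1 hlt
    exact nohalf t n1 ht
  · obtain ⟨t, ht⟩ := key 0 1 n0 hn0 hlt
    exact nohalf t n0 ht

lemma abs_min_sub_min (t a b : ℝ) : |min t a - min t b| ≤ |a - b| := by
  rcases le_total t a with h1 | h1 <;> rcases le_total t b with h2 | h2
  · rw [min_eq_left h1, min_eq_left h2]; simp [abs_nonneg]
  · rw [min_eq_left h1, min_eq_right h2, abs_of_nonneg (by linarith)]
    have := le_abs_self (a - b); linarith
  · rw [min_eq_right h1, min_eq_left h2, abs_of_nonpos (by linarith)]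
    have := neg_abs_le (a - b); linarith
  · rw [min_eq_right h1, min_eq_right h2]


/-- Lifting a continuous map on the square along `ℝ → ℝ/ℤ`, in the second variable. -/
lemma square_lift (H : I × I → AddCircle (1:ℝ)) (hH : Continuous H) :
    ∃ h : I × I → ℝ, Continuous h ∧ (∀ y : I, h (y, 0) = 0) ∧
      ∀ z : I × I, ((h z : ℝ) : AddCircle (1:ℝ)) = H z - H (z.1, 0) := by
  have hu : UniformContinuous H := CompactSpace.uniformContinuous_of_continuous hH
  obtain ⟨δ, hδpos, hδ⟩ := Metric.uniformContinuous_iff.1 hu (1/4) (by norm_num)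
  obtain ⟨n, hn⟩ := exists_nat_one_div_lt hδpos
  set N : ℕ := n + 1 with hN
  have hNpos : (0:ℝ) < N := by positivity
  have hNδ : (1 : ℝ) / N < δ := by exact_mod_cast hn
  -- grid points
  have cmem : ∀ i : ℕ, min ((i:ℝ)/N) 1 ∈ I := fun i =>
    ⟨le_min (by positivity) zero_le_one, min_le_right _ _⟩
  set c : ℕ → I := fun i => ⟨min ((i:ℝ)/N) 1, cmem i⟩ with hc
  -- truncation
  have mmem : ∀ (i : ℕ) (z : I × I), min (z.2 : ℝ) (c i : ℝ) ∈ I := fun i z =>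
    ⟨le_min z.2.2.1 (c i).2.1, (min_le_left _ _).trans z.2.2.2⟩
  set m : ℕ → I × I → I := fun i z => ⟨min (z.2 : ℝ) (c i : ℝ), mmem i z⟩ with hm
  have hmc : ∀ i, Continuous (fun z : I × I => m i z) := fun i =>
    Continuous.subtype_mk ((continuous_subtype_val.comp continuous_snd).min continuous_const) _
  set g : ℕ → I × I → AddCircle (1:ℝ) := fun i z => H (z.1, m i z) with hg
  have hgc : ∀ i, Continuous (g i) := fun i => hH.comp (continuous_fst.prodMk (hmc i))
  -- distance control
  have hdist : ∀ (i : ℕ) (z : I × I), dist (g (i+1) z) (g i z) < 1/4 := by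
    intro i z
    apply hδ
    rw [Prod.dist_eq]
    have h1 : dist z.1 z.1 = 0 := dist_self _
    rw [h1]
    have h2 : dist (m (i+1) z) (m i z) ≤ 1 / N := by
      rw [Subtype.dist_eq, Real.dist_eq]
      have e1 : |min ((z.2:ℝ)) ((c (i+1)):ℝ) - min ((z.2:ℝ)) ((c i):ℝ)|
          ≤ |((c (i+1)):ℝ) - ((c i):ℝ)| := abs_min_sub_min _ _ _
      have e2 : |((c (i+1)):ℝ) - ((c i):ℝ)| ≤ |((i+1:ℕ):ℝ)/N - ((i:ℕ):ℝ)/N| := by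
        rw [show ((c (i+1)):ℝ) = min 1 (((i+1:ℕ):ℝ)/N) from min_comm _ _,
            show ((c i):ℝ) = min 1 (((i:ℕ):ℝ)/N) from min_comm _ _]
        exact abs_min_sub_min 1 _ _
      have e3 : ((i+1:ℕ):ℝ)/N - ((i:ℕ):ℝ)/N = 1/N := by push_cast; ring
      exact e1.trans (e2.trans (le_of_eq (by rw [e3, abs_of_nonneg (by positivity)])))
    exact max_lt hδpos (h2.trans_lt hNδ)
  have hnorm : ∀ (i : ℕ) (z : I × I), ‖g (i+1) z - g i z‖ < 1/4 := by
    intro i z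
    rw [← dist_eq_norm]
    exact hdist i z
  -- the lift
  set h : I × I → ℝ := fun z => ∑ i ∈ Finset.range N, rho (g (i+1) z - g i z) with hh
  refine ⟨h, ?_, ?_, ?_⟩
  · apply continuous_finset_sum
    intro i _
    rw [continuous_iff_continuousAt]
    intro z
    exact ContinuousAt.comp (g := rho) (f := fun w => g (i+1) w - g i w)
      (continuousAt_rho (lt_trans (hnorm i z) (by norm_num)))
      (((hgc (i+1)).sub (hgc i)).continuousAt)
  · intro y
    have hm0 : ∀ i, m i (y, (0:I)) = (0 : I) := by
      intro i
      apply Subtype.ext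
      show min ((0:I) : ℝ) (c i : ℝ) = ((0:I) : ℝ)
      exact min_eq_left (c i).2.1
    have : ∀ i, g i (y, (0:I)) = H (y, 0) := by
      intro i
      show H (y, m i (y, (0:I))) = H (y, 0)
      rw [hm0 i]
    simp only [hh, this, sub_self, rho_zero, Finset.sum_const_zero]
  · intro z
    have hcoe : ((h z : ℝ) : AddCircle (1:ℝ))
        = ∑ i ∈ Finset.range N, (((rho (g (i+1) z - g i z) : ℝ) : AddCircle (1:ℝ))) := by
      rw [hh]
      exact map_sum (QuotientAddGroup.mk' (AddSubgroup.zmultiples (1:ℝ))) _ _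
    have hterm : ∀ i ∈ Finset.range N, ((rho (g (i+1) z - g i z) : ℝ) : AddCircle (1:ℝ))
        = g (i+1) z - g i z := fun i _ => coe_rho _
    have hN1 : g N z = H z := by
      show H (z.1, m N z) = H z
      have hcN : (c N : ℝ) = 1 := by
        show min ((N:ℝ)/N) 1 = 1
        rw [div_self (ne_of_gt hNpos), min_self]
      have : m N z = z.2 := by
        apply Subtype.ext
        show min ((z.2 : I) : ℝ) (c N : ℝ) = (z.2 : ℝ)
        rw [hcN]
        exact min_eq_left z.2.2.2
      rw [this]
    have h0 : g 0 z = H (z.1, 0) := by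
      show H (z.1, m 0 z) = H (z.1, 0)
      have hc0 : (c 0 : ℝ) = 0 := by
        show min (((0:ℕ):ℝ)/N) 1 = 0
        norm_num
      have : m 0 z = 0 := by
        apply Subtype.ext
        show min ((z.2 : I) : ℝ) (c 0 : ℝ) = ((0:I) : ℝ)
        rw [hc0, min_eq_right z.2.2.1]
        rfl
      rw [this]
    rw [hcoe, Finset.sum_congr rfl hterm, Finset.sum_range_sub (fun i => g i z), hN1, h0]

/-- A loop of winding number two in `ℝ/ℤ` is not null-homotopic. -/
lemma not_nullhomotopic_of_winding_two {a : AddCircle (1:ℝ)} (δ : Path a a)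
    (hδ : ∀ s : I, δ s = ((2 * (s:ℝ) : ℝ) : AddCircle (1:ℝ))) :
    ¬ δ.Homotopic (Path.refl a) := by
  rintro ⟨G⟩
  have ha : a = 0 := by
    have := (δ.source).symm.trans (hδ 0)
    simpa using this
  set H : I × I → AddCircle (1:ℝ) := fun z => G z with hHdef
  have hHcont : Continuous H := G.continuous
  have hH0 : ∀ t, H (0, t) = δ t := fun t => G.apply_zero t
  have hH1 : ∀ t, H (1, t) = a := fun t => G.apply_one t
  have hHs0 : ∀ y, H (y, 0) = a := fun y =>
    (G.eq_fst y (show (0:I) ∈ ({0, 1} : Set I) by simp)).trans δ.source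
  have hHs1 : ∀ y, H (y, 1) = a := fun y =>
    (G.eq_fst y (show (1:I) ∈ ({0, 1} : Set I) by simp)).trans δ.target
  obtain ⟨h, hhc, hh0, hhcoe⟩ := square_lift H hHcont
  have hcoe : ∀ z : I × I, ((h z : ℝ) : AddCircle (1:ℝ)) = H z := by
    intro z
    rw [hhcoe z, hHs0 z.1, ha, sub_zero]
  -- the endpoint function
  have hD : h (1, 1) = h (0, 1) := by
    have := eq_of_int_valued (f := fun y => h (y, 1))
      (hhc.comp (continuous_id.prodMk continuous_const)) (fun y => by
        rw [hcoe (y, 1), hHs1 y, ha])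
    simpa using this
  have hD1 : h (1, 1) = 0 := by
    have := eq_of_int_valued (f := fun t => h (1, t))
      (hhc.comp (continuous_const.prodMk continuous_id)) (fun t => by
        rw [hcoe (1, t), hH1 t, ha])
    simpa [hh0 1] using this
  have hD0 : h (0, 1) = 2 := by
    have key := eq_of_int_valued (f := fun t => h (0, t) - 2 * (t:ℝ))
      ((hhc.comp (continuous_const.prodMk continuous_id)).sub
        (continuous_const.mul continuous_subtype_val)) (fun t => by
        push_cast
        rw [QuotientAddGroup.mk_sub]
        rw [hcoe (0, t), hH0 t, hδ t, sub_self])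
    simp only [Icc.coe_one, Icc.coe_zero, mul_one, mul_zero, sub_zero, hh0 0] at key
    linarith
  rw [hD1, hD0] at hD
  norm_num at hD

/-- The deck transformation `(y, t) ↦ (-y, t+1)` as a permutation. -/
def e : Equiv.Perm (S2 × ℝ) where
  toFun a := (-a.1, a.2 + 1)
  invFun a := (-a.1, a.2 - 1)
  left_inv a := by simp
  right_inv a := by simp

lemma cont_e : Continuous e := by
  refine Continuous.prodMk ?_ ((continuous_snd).add continuous_const)
  exact continuous_neg.comp continuous_fst

lemma cont_e_symm : Continuous e.symm := by
  refine Continuous.prodMk ?_ ((continuous_snd).sub continuous_const)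
  exact continuous_neg.comp continuous_fst

lemma cont_zpow : ∀ n : ℤ, Continuous ⇑(e ^ n) := by
  intro n
  induction n using Int.induction_on with
  | zero => simpa using continuous_id
  | succ k ih =>
      have : (e ^ ((k : ℤ) + 1)) = e ^ (k : ℤ) * e := by rw [zpow_add_one]
      rw [this]
      have : ⇑(e ^ (k : ℤ) * e) = ⇑(e ^ (k : ℤ)) ∘ ⇑e := rfl
      rw [this]
      exact ih.comp cont_e
  | pred k ih =>
      have : (e ^ (-(k : ℤ) - 1)) = e ^ (-(k : ℤ)) * e⁻¹ := by
        rw [zpow_sub_one]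
      rw [this]
      have : ⇑(e ^ (-(k : ℤ)) * e⁻¹) = ⇑(e ^ (-(k : ℤ))) ∘ ⇑e.symm := rfl
      rw [this]
      exact ih.comp cont_e_symm

lemma mk_e (a : S2 × ℝ) : Quot.mk mtRel (e a) = Quot.mk mtRel a :=
  (Quot.sound ⟨rfl, rfl⟩).symm

lemma mk_e_symm (a : S2 × ℝ) : Quot.mk mtRel (e.symm a) = Quot.mk mtRel a := by
  conv_rhs => rw [show a = e (e.symm a) from (e.apply_symm_apply a).symm]
  rw [mk_e]

lemma mk_zpow (n : ℤ) : ∀ a : S2 × ℝ, Quot.mk mtRel ((e ^ n) a) = Quot.mk mtRel a := by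
  induction n using Int.induction_on with
  | zero => intro a; simp
  | succ k ih =>
      intro a
      rw [zpow_add_one]
      have : (e ^ (k : ℤ) * e) a = (e ^ (k : ℤ)) (e a) := rfl
      rw [this, ih (e a), mk_e]
  | pred k ih =>
      intro a
      rw [zpow_sub_one]
      have : (e ^ (-(k : ℤ)) * e⁻¹) a = (e ^ (-(k : ℤ))) (e.symm a) := rfl
      rw [this, ih (e.symm a), mk_e_symm]

/-- Characterisation of the quotient relation. -/
lemma mk_eq_mk_iff {a b : S2 × ℝ} :
    Quot.mk mtRel a = Quot.mk mtRel b ↔ ∃ n : ℤ, b = (e ^ n) a := by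
  constructor
  · intro hab
    have h := Quot.eqvGen_exact hab
    clear hab
    induction h with
    | rel a b hr =>
        refine ⟨1, ?_⟩
        rw [zpow_one]
        exact Prod.ext hr.1.symm hr.2.symm |>.symm
    | refl a => exact ⟨0, by simp⟩
    | symm a b _ ih =>
        obtain ⟨n, hn⟩ := ih
        refine ⟨-n, ?_⟩
        rw [hn, zpow_neg]
        exact (Equiv.symm_apply_apply _ _).symm
    | trans a b c _ _ ih1 ih2 =>
        obtain ⟨n, hn⟩ := ih1
        obtain ⟨m, hm⟩ := ih2
        refine ⟨n + m, ?_⟩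
        rw [hm, hn, add_comm, zpow_add]
        rfl
  · rintro ⟨n, rfl⟩
    exact (mk_zpow n a).symm

lemma isOpenMap_mk : IsOpenMap (Quot.mk mtRel) := by
  intro U hU
  have key : Quot.mk mtRel ⁻¹' (Quot.mk mtRel '' U) = ⋃ n : ℤ, ⇑(e ^ n) '' U := by
    ext z
    simp only [mem_preimage, mem_image, mem_iUnion]
    constructor
    · rintro ⟨u, hu, huz⟩
      obtain ⟨n, hn⟩ := mk_eq_mk_iff.1 huz
      exact ⟨n, u, hu, hn.symm⟩
    · rintro ⟨n, u, hu, huz⟩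
      exact ⟨u, hu, mk_eq_mk_iff.2 ⟨n, huz.symm⟩⟩
  have : IsOpen (Quot.mk mtRel ⁻¹' (Quot.mk mtRel '' U)) := by
    rw [key]
    refine isOpen_iUnion fun n => ?_
    have himg : ⇑(e ^ n) '' U = ⇑(e ^ n).symm ⁻¹' U := Equiv.image_eq_preimage_symm _ _
    rw [himg]
    have hsymm : ⇑(e ^ n).symm = ⇑(e ^ (-n)) := by
      rw [zpow_neg]
      rfl
    rw [hsymm]
    exact (cont_zpow (-n)).isOpen_preimage U hU
  exact this

lemma isOpenQuotientMap_mk : IsOpenQuotientMap (Quot.mk mtRel) :=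
  ⟨Quot.exists_rep, continuous_quot_mk, isOpenMap_mk⟩


/-- The homotopy map `(s, [y,t]) ↦ [y, t + 2s]`. -/
def Fmap : I × MT → MT := fun p =>
  Quot.lift (fun a : S2 × ℝ => Quot.mk mtRel (a.1, a.2 + 2 * (p.1 : ℝ)))
    (fun a b hab => by
      refine Quot.sound ⟨hab.1, ?_⟩
      show b.2 + 2 * (p.1 : ℝ) = a.2 + 2 * (p.1 : ℝ) + 1
      rw [hab.2]; ring) p.2

lemma cont_Fmap : Continuous Fmap := by
  have hq : IsOpenQuotientMap (Prod.map (id : I → I) (Quot.mk mtRel)) :=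
    IsOpenQuotientMap.id.prodMap isOpenQuotientMap_mk
  rw [← hq.continuous_comp_iff]
  show Continuous fun p : I × (S2 × ℝ) => Quot.mk mtRel (p.2.1, p.2.2 + 2 * (p.1 : ℝ))
  exact continuous_quot_mk.comp
    ((continuous_snd.fst).prodMk
      ((continuous_snd.snd).add (continuous_const.mul
        (continuous_subtype_val.comp continuous_fst))))

lemma mk_add_two (a : S2 × ℝ) : Quot.mk mtRel (a.1, a.2 + 2) = Quot.mk mtRel a := by
  have h1 : Quot.mk mtRel a = Quot.mk mtRel (-a.1, a.2 + 1) := Quot.sound ⟨rfl, rfl⟩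
  have h2 : Quot.mk mtRel (-a.1, a.2 + 1) = Quot.mk mtRel (a.1, a.2 + 2) := by
    refine Quot.sound ⟨?_, ?_⟩
    · show (a.1 : S2) = -(-a.1)
      rw [neg_neg]
    · show a.2 + 2 = a.2 + 1 + 1
      ring
  rw [← h2, ← h1]

/-- The homotopy from the identity of `MT` to itself. -/
def Fhomotopy : ContinuousMap.Homotopy (ContinuousMap.id MT) (ContinuousMap.id MT) where
  toFun := Fmap
  continuous_toFun := cont_Fmap
  map_zero_left := by
    refine Quot.ind fun a => ?_
    show Quot.mk mtRel (a.1, a.2 + 2 * ((0:I) : ℝ)) = Quot.mk mtRel a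
    norm_num
  map_one_left := by
    refine Quot.ind fun a => ?_
    show Quot.mk mtRel (a.1, a.2 + 2 * ((1:I) : ℝ)) = Quot.mk mtRel a
    rw [show (((1:I) : ℝ)) = 1 from rfl, mul_one]
    exact mk_add_two a

/-- The projection to the circle. -/
def phi : C(MT, AddCircle (1:ℝ)) where
  toFun := Quot.lift (fun a : S2 × ℝ => ((a.2 : ℝ) : AddCircle (1:ℝ)))
    (fun a b hab => by
      show ((a.2 : ℝ) : AddCircle (1:ℝ)) = ((b.2 : ℝ) : AddCircle (1:ℝ))
      rw [hab.2]
      exact (AddCircle.coe_add_period 1 a.2).symm)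
  continuous_toFun := continuous_quot_lift _
    ((AddCircle.continuous_mk' 1).comp continuous_snd)


end MTAux

end MTAuxSection

open MTAux unitInterval in
/-- There is a self-homotopy `F` of the identity of the mapping torus `M` of the antipodal
map of the 2-sphere, given by `F(s, [y, t]) = [y, t + 2s]` (it is well defined and
continuous, with `F(0, ·) = F(1, ·) = id`), whose trace loop `s ↦ F(s, x₀) = [x, 2s]` at the
base point `x₀ = [x, 0]` is not null-homotopic. -/
theorem self_homotopy_of_id_with_nontrivial_trace (x : S2) :
    ∃ F : ContinuousMap.Homotopy (ContinuousMap.id MT) (ContinuousMap.id MT),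
      (∀ (s : unitInterval) (y : S2) (t : ℝ),
        F (s, Quot.mk mtRel (y, t)) = Quot.mk mtRel (y, t + 2 * (s : ℝ))) ∧
      ∃ γ : Path (Quot.mk mtRel (x, 0)) (Quot.mk mtRel (x, 0)),
        (∀ s : unitInterval, γ s = F (s, Quot.mk mtRel (x, 0))) ∧
        ¬ γ.Homotopic (Path.refl (Quot.mk mtRel (x, 0))) := by
  refine ⟨Fhomotopy, fun s y t => rfl, ?_⟩
  set γ : Path (Quot.mk mtRel (x, 0)) (Quot.mk mtRel (x, 0)) :=
    { toFun := fun s => Fmap (s, Quot.mk mtRel (x, 0))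
      continuous_toFun := cont_Fmap.comp (continuous_id.prodMk continuous_const)
      source' := by
        show Quot.mk mtRel (x, 0 + 2 * ((0:I) : ℝ)) = Quot.mk mtRel (x, 0)
        norm_num
      target' := by
        show Quot.mk mtRel (x, 0 + 2 * ((1:I) : ℝ)) = Quot.mk mtRel (x, 0)
        rw [show (((1:I) : ℝ)) = 1 from rfl]
        simpa using mk_add_two (x, 0) } with hγ
  refine ⟨γ, fun s => rfl, ?_⟩
  intro hcon
  have hmap := hcon.map phi
  have hrefl : (Path.refl (Quot.mk mtRel (x, 0))).map phi.continuous
      = Path.refl (phi (Quot.mk mtRel (x, 0))) := by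
    ext t
    rfl
  rw [hrefl] at hmap
  refine not_nullhomotopic_of_winding_two (γ.map phi.continuous) ?_ hmap
  intro s
  show ((0 + 2 * (s:ℝ) : ℝ) : AddCircle (1:ℝ)) = ((2 * (s:ℝ) : ℝ) : AddCircle (1:ℝ))
  rw [zero_add]
end
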